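/- arXiv:2305.12679 — 5 statements merged into one kernel-verified Lean document; each statement's English description precedes it below -/
import Mathlib

section
/- Performance difference lemma: for any two stationary policies π1 and π2 of the MDP, (1−γ)·(J_{π1} − J_{π2}) = ⟨μ_{π1}, Q_{π2}(·, π1) − Q_{π2}(·, π2)⟩. -/
open MeasureTheory ProbabilityTheory Filter Set

noncomputable section

variable {S A : Type*} [MeasurableSpace S] [MeasurableSpace A]

/-- One transition step of the MDP at the level of state-action laws:
from `(s,a) ~ ρ`, draw `s' ~ P(·|s,a)` and `a' ~ κ(·|s')`. -/
def mdpStep (P : Kernel (S × A) S) (κ : Kernel S A) (ρ : Measure (S × A)) :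
    Measure (S × A) :=
  ρ.bind fun sa => (P sa).bind fun s' => (κ s').map fun a' => (s', a')

/-- Initial state-action law: `s ~ μ`, `a ~ κ(·|s)`. -/
def mdpInit (κ : Kernel S A) (μ : Measure S) : Measure (S × A) :=
  μ.bind fun s => (κ s).map fun a => (s, a)

/-- Law of `(s_i, a_i)` for the (possibly non-stationary) policy `π` started at `μ0`. -/
def saLaw (P : Kernel (S × A) S) (π : ℕ → Kernel S A) (μ0 : Measure S) :
    ℕ → Measure (S × A)
  | 0 => mdpInit (π 0) μ0
  | i + 1 => mdpStep P (π (i + 1)) (saLaw P π μ0 i)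

/-- Expected discounted return `J_π`. -/
def retJ (P : Kernel (S × A) S) (π : ℕ → Kernel S A) (μ0 : Measure S) (γ : ℝ)
    (R : S × A → ℝ) : ℝ :=
  ∑' i : ℕ, γ ^ i * ∫ sa, R sa ∂(saLaw P π μ0 i)

/-- Law of `(s_i, a_i)` started from a state-action measure `ρ` at step 0. -/
def saLawFrom (P : Kernel (S × A) S) (π : ℕ → Kernel S A) (ρ : Measure (S × A)) :
    ℕ → Measure (S × A)
  | 0 => ρ
  | i + 1 => mdpStep P (π (i + 1)) (saLawFrom P π ρ i)

/-- State-action value function `Q_π(s, a)`. -/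
def Qval (P : Kernel (S × A) S) (π : ℕ → Kernel S A) (γ : ℝ) (R : S × A → ℝ)
    (sa : S × A) : ℝ :=
  ∑' i : ℕ, γ ^ i * ∫ x, R x ∂(saLawFrom P π (Measure.dirac sa) i)

/-- State value function `V_π(s)`. -/
def Vval (P : Kernel (S × A) S) (π : ℕ → Kernel S A) (γ : ℝ) (R : S × A → ℝ)
    (s : S) : ℝ :=
  retJ P π (Measure.dirac s) γ R

/-- Discounted state occupancy measure `μ_π = (1-γ) ∑ γ^i μ_{π,i}`. -/
def stateOcc (P : Kernel (S × A) S) (π : ℕ → Kernel S A) (μ0 : Measure S) (γ : ℝ) :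
    Measure S :=
  ENNReal.ofReal (1 - γ) •
    Measure.sum fun i => ENNReal.ofReal (γ ^ i) • (saLaw P π μ0 i).map Prod.fst



namespace PDL

open ProbabilityTheory

/-! ### Generic measure-theoretic helpers -/

lemma isProbabilityMeasure_bind' {α β : Type*} [MeasurableSpace α] [MeasurableSpace β]
    (μ : Measure α) [IsProbabilityMeasure μ] (κ : Kernel α β) [IsMarkovKernel κ] :
    IsProbabilityMeasure (μ.bind κ) := by
  constructor
  rw [Measure.bind_apply MeasurableSet.univ κ.measurable.aemeasurable]
  simp [measure_univ]

lemma integrable_of_bounds {α : Type*} [MeasurableSpace α] (μ : Measure α)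
    [IsProbabilityMeasure μ] {f : α → ℝ} (hm : Measurable f) {C : ℝ}
    (h0 : ∀ x, 0 ≤ f x) (hC : ∀ x, f x ≤ C) : Integrable f μ := by
  refine Integrable.mono' (integrable_const C) hm.aestronglyMeasurable
    (Filter.Eventually.of_forall fun x => ?_)
  rw [Real.norm_eq_abs, abs_of_nonneg (h0 x)]
  exact hC x

lemma integral_le_of_bounds {α : Type*} [MeasurableSpace α] (μ : Measure α)
    [IsProbabilityMeasure μ] {f : α → ℝ} (hm : Measurable f) {C : ℝ}
    (h0 : ∀ x, 0 ≤ f x) (hC : ∀ x, f x ≤ C) : ∫ x, f x ∂μ ≤ C := by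
  calc ∫ x, f x ∂μ ≤ ∫ _x, C ∂μ :=
        integral_mono (integrable_of_bounds μ hm h0 hC) (integrable_const C) hC
    _ = C := by simp

lemma integral_bind_kernel {α β : Type*} [MeasurableSpace α] [MeasurableSpace β]
    (μ : Measure α) [IsProbabilityMeasure μ] (κ : Kernel α β) [IsMarkovKernel κ]
    {f : β → ℝ} (hf : Measurable f) {C : ℝ} (h0 : ∀ b, 0 ≤ f b) (hC : ∀ b, f b ≤ C) :
    ∫ b, f b ∂(μ.bind κ) = ∫ a, ∫ b, f b ∂(κ a) ∂μ := by
  have hof : Measurable fun b => ENNReal.ofReal (f b) := ENNReal.measurable_ofReal.comp hf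
  have hLfin : ∀ a : α, ∫⁻ b, ENNReal.ofReal (f b) ∂(κ a) ≤ ENNReal.ofReal C := by
    intro a
    calc ∫⁻ b, ENNReal.ofReal (f b) ∂(κ a) ≤ ∫⁻ _b, ENNReal.ofReal C ∂(κ a) :=
          lintegral_mono fun b => ENNReal.ofReal_le_ofReal (hC b)
      _ = ENNReal.ofReal C := by simp
  have hinner : ∀ a : α, ∫ b, f b ∂(κ a) = (∫⁻ b, ENNReal.ofReal (f b) ∂(κ a)).toReal :=
    fun a => integral_eq_lintegral_of_nonneg_ae (Filter.Eventually.of_forall h0)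
      hf.aestronglyMeasurable
  rw [integral_eq_lintegral_of_nonneg_ae (Filter.Eventually.of_forall h0)
    hf.aestronglyMeasurable, Measure.lintegral_bind κ.measurable.aemeasurable hof.aemeasurable]
  simp_rw [hinner]
  rw [integral_toReal ((Measurable.lintegral_kernel hof).aemeasurable)
    (Filter.Eventually.of_forall fun a => lt_of_le_of_lt (hLfin a) ENNReal.ofReal_lt_top)]

lemma measurable_integral_kernel {α β : Type*} [MeasurableSpace α] [MeasurableSpace β]
    (κ : Kernel α β) [IsSFiniteKernel κ] {f : β → ℝ} (hf : Measurable f)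
    (h0 : ∀ b, 0 ≤ f b) : Measurable fun a => ∫ b, f b ∂(κ a) := by
  have heq : (fun a => ∫ b, f b ∂(κ a))
      = fun a => (∫⁻ b, ENNReal.ofReal (f b) ∂(κ a)).toReal :=
    funext fun a => integral_eq_lintegral_of_nonneg_ae (Filter.Eventually.of_forall h0)
      hf.aestronglyMeasurable
  rw [heq]
  exact (Measurable.lintegral_kernel (ENNReal.measurable_ofReal.comp hf)).ennreal_toReal

lemma measurable_tsum_real {α : Type*} [MeasurableSpace α] {h : ℕ → α → ℝ}
    (hm : ∀ j, Measurable (h j)) (hs : ∀ x, Summable fun j => h j x) :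
    Measurable fun x => ∑' j, h j x := by
  apply measurable_of_tendsto_metrizable (f := fun n x => ∑ j ∈ Finset.range n, h j x)
  · exact fun n => Finset.measurable_sum _ fun j _ => hm j
  · rw [tendsto_pi_nhds]
    exact fun x => (hs x).hasSum.tendsto_sum_nat

lemma norm_mul_pow_le {γ C x : ℝ} (hγ : 0 ≤ γ) (hx : ‖x‖ ≤ C) (j : ℕ) :
    ‖γ ^ j * x‖ ≤ γ ^ j * C := by
  rw [norm_mul, Real.norm_eq_abs (γ ^ j), abs_of_nonneg (pow_nonneg hγ j)]
  exact mul_le_mul_of_nonneg_left hx (pow_nonneg hγ j)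

lemma summable_of_geom_bound {γ D : ℝ} (h0 : 0 ≤ γ) (h1 : γ < 1) {u : ℕ → ℝ}
    (hb : ∀ j, ‖u j‖ ≤ γ ^ j * D) : Summable u :=
  Summable.of_norm (Summable.of_nonneg_of_le (fun _ => norm_nonneg _) hb
    ((summable_geometric_of_lt_one h0 h1).mul_right D))

lemma norm_tsum_le_geom {γ D : ℝ} (h0 : 0 ≤ γ) (h1 : γ < 1) {u : ℕ → ℝ}
    (hb : ∀ j, ‖u j‖ ≤ γ ^ j * D) : ‖∑' j, u j‖ ≤ (1 - γ)⁻¹ * D := by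
  have hgs : Summable fun j : ℕ => γ ^ j * D :=
    (summable_geometric_of_lt_one h0 h1).mul_right D
  have hsum : Summable fun j => ‖u j‖ :=
    Summable.of_nonneg_of_le (fun _ => norm_nonneg _) hb hgs
  calc ‖∑' j, u j‖ ≤ ∑' j, ‖u j‖ := norm_tsum_le_tsum_norm hsum
    _ ≤ ∑' j, γ ^ j * D := Summable.tsum_le_tsum hb hsum hgs
    _ = (1 - γ)⁻¹ * D := by
        rw [tsum_mul_right, tsum_geometric_of_lt_one h0 h1]

lemma tsum_lintegral_norm_ne_top {α : Type*} [MeasurableSpace α] {μ : Measure α}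
    [IsProbabilityMeasure μ] {h : ℕ → α → ℝ} {γ D : ℝ} (hγ0 : 0 ≤ γ) (hγ1 : γ < 1)
    (hb : ∀ j x, ‖h j x‖ ≤ γ ^ j * D) :
    (∑' j, ∫⁻ x, (‖h j x‖₊ : ENNReal) ∂μ) ≠ ⊤ := by
  have key : ∀ j, ∫⁻ x, (‖h j x‖₊ : ENNReal) ∂μ ≤ ENNReal.ofReal (γ ^ j * D) := by
    intro j
    calc ∫⁻ x, (‖h j x‖₊ : ENNReal) ∂μ ≤ ∫⁻ _x, ENNReal.ofReal (γ ^ j * D) ∂μ := by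
          refine lintegral_mono fun x => ?_
          rw [← enorm_eq_nnnorm, ← ofReal_norm]
          exact ENNReal.ofReal_le_ofReal (hb j x)
      _ = ENNReal.ofReal (γ ^ j * D) := by simp
  have h2 : (∑' j : ℕ, ENNReal.ofReal (γ ^ j * D)) ≠ ⊤ := by
    have hrw : ∀ j : ℕ, ENNReal.ofReal (γ ^ j * D)
        = (ENNReal.ofReal γ) ^ j * ENNReal.ofReal D := by
      intro j
      rw [ENNReal.ofReal_mul (pow_nonneg hγ0 j), ENNReal.ofReal_pow hγ0]
    simp_rw [hrw]
    rw [ENNReal.tsum_mul_right]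
    refine ENNReal.mul_ne_top ?_ ENNReal.ofReal_ne_top
    rw [ENNReal.tsum_geometric]
    refine ENNReal.inv_ne_top.mpr fun hzero => ?_
    have hlt : ENNReal.ofReal γ < 1 := ENNReal.ofReal_lt_one.mpr hγ1
    exact absurd (tsub_eq_zero_iff_le.mp hzero) (not_le.mpr hlt)
  exact ne_top_of_le_ne_top h2 (ENNReal.tsum_le_tsum key)

/-! ### MDP kernels -/

variable {S A : Type*} [MeasurableSpace S] [MeasurableSpace A]

/-- The kernel `s ↦ law of (s, a)` with `a ~ κ(·|s)`. -/
def polK (κ : Kernel S A) [IsMarkovKernel κ] : Kernel S (S × A) := Kernel.id ×ₖ κ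

instance polK_markov (κ : Kernel S A) [IsMarkovKernel κ] : IsMarkovKernel (polK κ) := by
  rw [polK]; infer_instance

lemma polK_apply (κ : Kernel S A) [IsMarkovKernel κ] (s : S) :
    polK κ s = (κ s).map fun a => (s, a) := by
  rw [polK, Kernel.prod_apply, Kernel.id_apply, Measure.dirac_prod]

/-- The kernel of one MDP step followed by a draw from the policy. -/
def stepK (P : Kernel (S × A) S) [IsMarkovKernel P] (κ : Kernel S A) [IsMarkovKernel κ] :
    Kernel (S × A) (S × A) := polK κ ∘ₖ P

instance stepK_markov (P : Kernel (S × A) S) [IsMarkovKernel P] (κ : Kernel S A)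
    [IsMarkovKernel κ] : IsMarkovKernel (stepK P κ) := by
  rw [stepK]; infer_instance

/-- Iterates of `stepK`. -/
def iterK (P : Kernel (S × A) S) [IsMarkovKernel P] (κ : Kernel S A) [IsMarkovKernel κ] :
    ℕ → Kernel (S × A) (S × A)
  | 0 => Kernel.id
  | j + 1 => stepK P κ ∘ₖ iterK P κ j

instance iterK_markov (P : Kernel (S × A) S) [IsMarkovKernel P] (κ : Kernel S A)
    [IsMarkovKernel κ] : ∀ j, IsMarkovKernel (iterK P κ j)
  | 0 => by rw [iterK]; infer_instance
  | j + 1 => by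
      rw [iterK]
      haveI := iterK_markov P κ j
      infer_instance

lemma mdpInit_eq (κ : Kernel S A) [IsMarkovKernel κ] (μ : Measure S) :
    mdpInit κ μ = μ.bind (polK κ) := by
  simp only [mdpInit]
  exact congrArg μ.bind (funext fun s => (polK_apply κ s).symm)

lemma mdpStep_eq (P : Kernel (S × A) S) [IsMarkovKernel P] (κ : Kernel S A)
    [IsMarkovKernel κ] (ρ : Measure (S × A)) :
    mdpStep P κ ρ = ρ.bind (stepK P κ) := by
  simp only [mdpStep]
  refine congrArg ρ.bind (funext fun sa => ?_)
  rw [stepK, Kernel.comp_apply]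
  exact congrArg (P sa).bind (funext fun s' => (polK_apply κ s').symm)

lemma bind_stepK (P : Kernel (S × A) S) [IsMarkovKernel P] (κ : Kernel S A)
    [IsMarkovKernel κ] (ρ : Measure (S × A)) :
    ρ.bind (stepK P κ) = (ρ.bind ⇑P).bind (polK κ) := by
  rw [Measure.bind_bind P.measurable.aemeasurable (polK κ).measurable.aemeasurable]
  refine congrArg ρ.bind (funext fun sa => ?_)
  rw [show stepK P κ = polK κ ∘ₖ P from rfl, Kernel.comp_apply]

lemma iterK_succ' (P : Kernel (S × A) S) [IsMarkovKernel P] (κ : Kernel S A)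
    [IsMarkovKernel κ] : ∀ j, iterK P κ (j + 1) = iterK P κ j ∘ₖ stepK P κ
  | 0 => by
      show stepK P κ ∘ₖ iterK P κ 0 = iterK P κ 0 ∘ₖ stepK P κ
      rw [show iterK P κ 0 = Kernel.id from rfl, Kernel.comp_id, Kernel.id_comp]
  | j + 1 => by
      show stepK P κ ∘ₖ iterK P κ (j + 1) = iterK P κ (j + 1) ∘ₖ stepK P κ
      conv_lhs => rw [iterK_succ' P κ j]
      rw [show iterK P κ (j + 1) = stepK P κ ∘ₖ iterK P κ j from rfl,
        Kernel.comp_assoc]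

lemma saLawFrom_eq (P : Kernel (S × A) S) [IsMarkovKernel P] (κ : Kernel S A)
    [IsMarkovKernel κ] (ρ : Measure (S × A)) :
    ∀ j, saLawFrom P (fun _ => κ) ρ j = ρ.bind (iterK P κ j)
  | 0 => by
      rw [show saLawFrom P (fun _ => κ) ρ 0 = ρ from rfl]
      rw [show (⇑(iterK P κ 0) : S × A → Measure (S × A)) = Measure.dirac from
        funext fun sa => Kernel.id_apply sa]
      exact Measure.bind_dirac.symm
  | j + 1 => by
      rw [show saLawFrom P (fun _ => κ) ρ (j + 1)
          = mdpStep P κ (saLawFrom P (fun _ => κ) ρ j) from rfl,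
        saLawFrom_eq P κ ρ j, mdpStep_eq,
        Measure.bind_bind (iterK P κ j).measurable.aemeasurable (stepK P κ).measurable.aemeasurable]
      refine (congrArg ρ.bind (funext fun sa => ?_)).symm
      rw [show iterK P κ (j + 1) = stepK P κ ∘ₖ iterK P κ j from rfl, Kernel.comp_apply]

lemma saLaw_eq_from (P : Kernel (S × A) S) (κ : Kernel S A) (μ0 : Measure S) :
    ∀ i, saLaw P (fun _ => κ) μ0 i = saLawFrom P (fun _ => κ) (mdpInit κ μ0) i
  | 0 => rfl
  | i + 1 => by
      rw [show saLaw P (fun _ => κ) μ0 (i + 1)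
          = mdpStep P κ (saLaw P (fun _ => κ) μ0 i) from rfl,
        saLaw_eq_from P κ μ0 i]
      rfl

lemma saLaw_eq (P : Kernel (S × A) S) [IsMarkovKernel P] (κ : Kernel S A)
    [IsMarkovKernel κ] (μ0 : Measure S) (i : ℕ) :
    saLaw P (fun _ => κ) μ0 i = (μ0.bind (polK κ)).bind (iterK P κ i) := by
  rw [saLaw_eq_from, saLawFrom_eq, mdpInit_eq]

lemma fst_bind_polK (κ : Kernel S A) [IsMarkovKernel κ] (μ : Measure S) :
    (μ.bind (polK κ)).map Prod.fst = μ := by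
  rw [← Measure.bind_dirac_eq_map _ measurable_fst,
    Measure.bind_bind (polK κ).measurable.aemeasurable
      (show Measurable fun x : S × A => Measure.dirac x.1 from
        Measure.measurable_dirac.comp measurable_fst).aemeasurable]
  have hkey : ∀ s : S, (polK κ s).bind (fun x : S × A => Measure.dirac x.1)
      = Measure.dirac s := by
    intro s
    rw [polK_apply, Measure.bind_dirac_eq_map _ measurable_fst,
      Measure.map_map measurable_fst (measurable_prodMk_left)]
    have : (Prod.fst ∘ fun a : A => (s, a)) = fun _ : A => s := rfl
    rw [this, Measure.map_const, measure_univ, one_smul]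
  simp_rw [hkey]
  exact Measure.bind_dirac


/-! ### The iterated value integrand -/

/-- `gfun P κ R j sa` is the expected reward `j` steps after starting from `(s,a) = sa`
and following policy `κ`. -/
def gfun (P : Kernel (S × A) S) [IsMarkovKernel P] (κ : Kernel S A) [IsMarkovKernel κ]
    (R : S × A → ℝ) (j : ℕ) (sa : S × A) : ℝ :=
  ∫ x, R x ∂(iterK P κ j sa)

variable {P : Kernel (S × A) S} [IsMarkovKernel P] {κ : Kernel S A} [IsMarkovKernel κ]
  {R : S × A → ℝ} {C : ℝ}

lemma gfun_zero (hR : Measurable R) : gfun P κ R 0 = R := by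
  funext sa
  show ∫ x, R x ∂(iterK P κ 0 sa) = R sa
  rw [show iterK P κ 0 = Kernel.id from rfl, Kernel.id_apply,
    integral_dirac' _ _ hR.stronglyMeasurable]

lemma gfun_measurable (hR : Measurable R) (h0 : ∀ sa, 0 ≤ R sa) (j : ℕ) :
    Measurable (gfun P κ R j) :=
  measurable_integral_kernel _ hR h0

lemma gfun_nonneg (h0 : ∀ sa, 0 ≤ R sa) (j : ℕ) (sa : S × A) : 0 ≤ gfun P κ R j sa :=
  integral_nonneg h0

lemma gfun_le (hR : Measurable R) (h0 : ∀ sa, 0 ≤ R sa) (hC : ∀ sa, R sa ≤ C) (j : ℕ)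
    (sa : S × A) : gfun P κ R j sa ≤ C :=
  integral_le_of_bounds _ hR h0 hC

lemma gfun_norm_le (hR : Measurable R) (h0 : ∀ sa, 0 ≤ R sa) (hC : ∀ sa, R sa ≤ C) (j : ℕ)
    (sa : S × A) : ‖gfun P κ R j sa‖ ≤ C := by
  rw [Real.norm_eq_abs, abs_of_nonneg (gfun_nonneg h0 j sa)]
  exact gfun_le hR h0 hC j sa

lemma gfun_succ (hR : Measurable R) (h0 : ∀ sa, 0 ≤ R sa) (hC : ∀ sa, R sa ≤ C) (j : ℕ)
    (sa : S × A) :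
    gfun P κ R (j + 1) sa = ∫ x, gfun P κ R j x ∂(stepK P κ sa) := by
  show ∫ x, R x ∂(iterK P κ (j + 1) sa) = _
  rw [iterK_succ', Kernel.comp_apply, integral_bind_kernel _ _ hR h0 hC]
  rfl

lemma Qval_eq_tsum (γ : ℝ) (sa : S × A) :
    Qval P (fun _ => κ) γ R sa = ∑' j, γ ^ j * gfun P κ R j sa := by
  show (∑' j : ℕ, γ ^ j * ∫ x, R x ∂(saLawFrom P (fun _ => κ) (Measure.dirac sa) j)) = _
  refine tsum_congr fun j => ?_
  rw [saLawFrom_eq P κ (Measure.dirac sa) j, Measure.dirac_bind (iterK P κ j).measurable]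
  rfl

lemma norm_integral_gfun_polK_le (π' : Kernel S A) [IsMarkovKernel π']
    (hR : Measurable R) (h0 : ∀ sa, 0 ≤ R sa) (hC : ∀ sa, R sa ≤ C) (j : ℕ) (s : S) :
    ‖∫ x, gfun P κ R j x ∂(polK π' s)‖ ≤ C := by
  rw [Real.norm_eq_abs, abs_of_nonneg (integral_nonneg (gfun_nonneg h0 j))]
  exact integral_le_of_bounds _ (gfun_measurable hR h0 j) (gfun_nonneg h0 j)
    (gfun_le hR h0 hC j)

lemma integral_Qval (π' : Kernel S A) [IsMarkovKernel π'] {γ : ℝ}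
    (hγ0 : 0 ≤ γ) (hγ1 : γ < 1) (hR : Measurable R) (h0 : ∀ sa, 0 ≤ R sa)
    (hC : ∀ sa, R sa ≤ C) (s : S) :
    ∫ a, Qval P (fun _ => κ) γ R (s, a) ∂(π' s)
      = ∑' j, γ ^ j * ∫ x, gfun P κ R j x ∂(polK π' s) := by
  have h1 : ∀ a : A, Qval P (fun _ => κ) γ R (s, a)
      = ∑' j, γ ^ j * gfun P κ R j (s, a) := fun a => Qval_eq_tsum γ (s, a)
  simp only [h1]
  rw [integral_tsum (f := fun j (a : A) => γ ^ j * gfun P κ R j (s, a))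
    (fun j => (measurable_const.mul
      ((gfun_measurable hR h0 j).comp measurable_prodMk_left)).aestronglyMeasurable)
    (tsum_lintegral_norm_ne_top (D := C) hγ0 hγ1 (fun j a => by
      refine norm_mul_pow_le hγ0 ?_ j
      exact gfun_norm_le hR h0 hC j (s, a)))]
  refine tsum_congr fun j => ?_
  rw [integral_const_mul]
  congr 1
  rw [polK_apply, integral_map measurable_prodMk_left.aemeasurable
    (gfun_measurable hR h0 j).aestronglyMeasurable]


/-! ### The series endgame -/

lemma series_endgame {γ : ℝ} (hγ0 : 0 ≤ γ) (hγ1 : γ < 1) {C : ℝ}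
    (aa bb : ℕ → ℕ → ℝ) (r : ℕ → ℝ) (J2 : ℝ)
    (hbnd_a : ∀ i j, ‖aa i j‖ ≤ C) (hbnd_b : ∀ i j, ‖bb i j‖ ≤ C)
    (h0 : ∀ i, aa i 0 = r i)
    (hkey : ∀ i j, aa i (j + 1) = bb (i + 1) j)
    (hJ2 : J2 = ∑' j, γ ^ j * bb 0 j) :
    (∑' i, γ ^ i * ∑' j, γ ^ j * (aa i j - bb i j)) = (∑' i, γ ^ i * r i) - J2 := by
  have sA : ∀ i, Summable fun j => γ ^ j * aa i j := fun i =>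
    summable_of_geom_bound hγ0 hγ1 (fun j => norm_mul_pow_le hγ0 (hbnd_a i j) j)
  have sB : ∀ i, Summable fun j => γ ^ j * bb i j := fun i =>
    summable_of_geom_bound hγ0 hγ1 (fun j => norm_mul_pow_le hγ0 (hbnd_b i j) j)
  have hUb : ∀ i, ‖∑' j, γ ^ j * bb i j‖ ≤ (1 - γ)⁻¹ * C := fun i =>
    norm_tsum_le_geom hγ0 hγ1 (fun j => norm_mul_pow_le hγ0 (hbnd_b i j) j)
  have hT : ∀ i, (∑' j, γ ^ j * aa i j) = aa i 0 + γ * ∑' j, γ ^ j * bb (i + 1) j := by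
    intro i
    rw [Summable.tsum_eq_zero_add (sA i)]
    simp only [pow_zero, one_mul]
    congr 1
    have hre : ∀ j : ℕ, γ ^ (j + 1) * aa i (j + 1) = γ * (γ ^ j * bb (i + 1) j) := by
      intro j; rw [hkey i j]; ring
    calc (∑' j, γ ^ (j + 1) * aa i (j + 1)) = ∑' j, γ * (γ ^ j * bb (i + 1) j) :=
          tsum_congr hre
      _ = γ * ∑' j, γ ^ j * bb (i + 1) j := by rw [tsum_mul_left]
  have hinner : ∀ i, (∑' j, γ ^ j * (aa i j - bb i j))
      = (∑' j, γ ^ j * aa i j) - ∑' j, γ ^ j * bb i j := by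
    intro i
    rw [← Summable.tsum_sub (sA i) (sB i)]
    exact tsum_congr fun j => mul_sub _ _ _
  have hterm : ∀ i, γ ^ i * (∑' j, γ ^ j * (aa i j - bb i j))
      = γ ^ i * aa i 0 + (γ ^ (i + 1) * (∑' j, γ ^ j * bb (i + 1) j)
        - γ ^ i * ∑' j, γ ^ j * bb i j) := by
    intro i; rw [hinner i, hT i]; ring
  have sx : Summable fun i => γ ^ i * aa i 0 :=
    summable_of_geom_bound hγ0 hγ1 (fun i => norm_mul_pow_le hγ0 (hbnd_a i 0) i)
  have sv : Summable fun i => γ ^ i * ∑' j, γ ^ j * bb i j :=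
    summable_of_geom_bound hγ0 hγ1 (fun i => norm_mul_pow_le hγ0 (hUb i) i)
  have sv' : Summable fun i => γ ^ (i + 1) * ∑' j, γ ^ j * bb (i + 1) j :=
    (summable_nat_add_iff 1).mpr sv
  calc (∑' i, γ ^ i * ∑' j, γ ^ j * (aa i j - bb i j))
      = ∑' i, (γ ^ i * aa i 0 + (γ ^ (i + 1) * (∑' j, γ ^ j * bb (i + 1) j)
          - γ ^ i * ∑' j, γ ^ j * bb i j)) := tsum_congr hterm
    _ = (∑' i, γ ^ i * aa i 0) + ((∑' i, γ ^ (i + 1) * ∑' j, γ ^ j * bb (i + 1) j)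
          - ∑' i, γ ^ i * ∑' j, γ ^ j * bb i j) := by
        rw [Summable.tsum_add sx (sv'.sub sv), Summable.tsum_sub sv' sv]
    _ = (∑' i, γ ^ i * aa i 0) - ∑' j, γ ^ j * bb 0 j := by
        have h00 : (∑' i, γ ^ i * ∑' j, γ ^ j * bb i j)
            = γ ^ 0 * (∑' j, γ ^ j * bb 0 j)
              + ∑' i, γ ^ (i + 1) * ∑' j, γ ^ j * bb (i + 1) j := Summable.tsum_eq_zero_add sv
        simp only [pow_zero, one_mul] at h00
        linarith
    _ = (∑' i, γ ^ i * r i) - J2 := by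
        rw [hJ2]
        congr 1
        exact tsum_congr fun i => by rw [h0 i]

end PDL



open PDL

/-- **Performance difference lemma** (Statement 0):
for any two stationary policies `π1`, `π2`,
`(1 - γ) * (J_{π1} - J_{π2}) = ⟨μ_{π1}, Q_{π2}(·, π1) - Q_{π2}(·, π2)⟩`. -/
theorem performance_difference_lemma
    (P : Kernel (S × A) S) [IsMarkovKernel P]
    (π1 π2 : Kernel S A) [IsMarkovKernel π1] [IsMarkovKernel π2]
    (μ0 : Measure S) [IsProbabilityMeasure μ0]
    (γ : ℝ) (hγ : γ ∈ Set.Ioo (0 : ℝ) 1)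
    (Rmax : ℝ) (R : S × A → ℝ) (hRmeas : Measurable R)
    (hRrange : ∀ sa, R sa ∈ Set.Icc 0 Rmax) :
    (1 - γ) * (retJ P (fun _ => π1) μ0 γ R - retJ P (fun _ => π2) μ0 γ R) =
      ∫ s,
        ((∫ a, Qval P (fun _ => π2) γ R (s, a) ∂(π1 s)) -
          (∫ a, Qval P (fun _ => π2) γ R (s, a) ∂(π2 s)))
        ∂(stateOcc P (fun _ => π1) μ0 γ) := by
  obtain ⟨hγ0, hγ1⟩ := hγ
  have hγ0' : (0 : ℝ) ≤ γ := le_of_lt hγ0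
  set C : ℝ := max Rmax 0 with hCdef
  have hR0 : ∀ sa, 0 ≤ R sa := fun sa => (hRrange sa).1
  have hRC : ∀ sa, R sa ≤ C := fun sa => le_max_of_le_left (hRrange sa).2
  have hgm : ∀ j, Measurable (gfun P π2 R j) := gfun_measurable hRmeas hR0
  have hg0 : ∀ j sa, 0 ≤ gfun P π2 R j sa := fun j sa => gfun_nonneg hR0 j sa
  have hgC : ∀ j sa, gfun P π2 R j sa ≤ C := fun j sa => gfun_le hRmeas hR0 hRC j sa
  -- probability of the state-action laws
  have hρprob : ∀ i, IsProbabilityMeasure (saLaw P (fun _ => π1) μ0 i) := by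
    intro i
    induction i with
    | zero =>
        rw [show saLaw P (fun _ => π1) μ0 0 = mdpInit π1 μ0 from rfl, mdpInit_eq]
        exact isProbabilityMeasure_bind' _ _
    | succ i ih =>
        rw [show saLaw P (fun _ => π1) μ0 (i + 1)
            = mdpStep P π1 (saLaw P (fun _ => π1) μ0 i) from rfl, mdpStep_eq]
        haveI := ih
        exact isProbabilityMeasure_bind' _ _
  have hνprob : ∀ i, IsProbabilityMeasure ((saLaw P (fun _ => π1) μ0 i).map Prod.fst) := by
    intro i
    haveI := hρprob i
    exact Measure.isProbabilityMeasure_map measurable_fst.aemeasurable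
  -- structure of the state-action laws
  have hrep0 : saLaw P (fun _ => π1) μ0 0 = μ0.bind (polK π1) := mdpInit_eq π1 μ0
  have hrepS : ∀ i, saLaw P (fun _ => π1) μ0 (i + 1)
      = ((saLaw P (fun _ => π1) μ0 i).bind ⇑P).bind (polK π1) := by
    intro i
    rw [show saLaw P (fun _ => π1) μ0 (i + 1)
        = mdpStep P π1 (saLaw P (fun _ => π1) μ0 i) from rfl, mdpStep_eq,
      bind_stepK]
  have hfst0 : (saLaw P (fun _ => π1) μ0 0).map Prod.fst = μ0 := by
    rw [hrep0, fst_bind_polK]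
  have hfstS : ∀ i, (saLaw P (fun _ => π1) μ0 (i + 1)).map Prod.fst
      = (saLaw P (fun _ => π1) μ0 i).bind ⇑P := by
    intro i; rw [hrepS i, fst_bind_polK]
  have hmarg : ∀ i, ((saLaw P (fun _ => π1) μ0 i).map Prod.fst).bind (polK π1)
      = saLaw P (fun _ => π1) μ0 i := by
    intro i
    cases i with
    | zero => rw [hrep0, fst_bind_polK]
    | succ n => rw [hrepS n, fst_bind_polK]
  -- measurability and bounds for the per-step integrands
  have hD1m : ∀ j, Measurable fun s => ∫ x, gfun P π2 R j x ∂(polK π1 s) := fun j =>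
    measurable_integral_kernel (polK π1) (hgm j) (hg0 j)
  have hD2m : ∀ j, Measurable fun s => ∫ x, gfun P π2 R j x ∂(polK π2 s) := fun j =>
    measurable_integral_kernel (polK π2) (hgm j) (hg0 j)
  have hHm : ∀ j, Measurable fun s => γ ^ j * ((∫ x, gfun P π2 R j x ∂(polK π1 s))
      - ∫ x, gfun P π2 R j x ∂(polK π2 s)) := fun j =>
    measurable_const.mul ((hD1m j).sub (hD2m j))
  have hHb : ∀ j s, ‖γ ^ j * ((∫ x, gfun P π2 R j x ∂(polK π1 s))
      - ∫ x, gfun P π2 R j x ∂(polK π2 s))‖ ≤ γ ^ j * (2 * C) := by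
    intro j s
    refine norm_mul_pow_le hγ0' ?_ j
    calc ‖(∫ x, gfun P π2 R j x ∂(polK π1 s)) - ∫ x, gfun P π2 R j x ∂(polK π2 s)‖
        ≤ ‖∫ x, gfun P π2 R j x ∂(polK π1 s)‖ + ‖∫ x, gfun P π2 R j x ∂(polK π2 s)‖ :=
          norm_sub_le _ _
      _ ≤ C + C := add_le_add
          (norm_integral_gfun_polK_le π1 hRmeas hR0 hRC j s)
          (norm_integral_gfun_polK_le π2 hRmeas hR0 hRC j s)
      _ = 2 * C := by ring
  have hHsum : ∀ s, Summable fun j => γ ^ j * ((∫ x, gfun P π2 R j x ∂(polK π1 s))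
      - ∫ x, gfun P π2 R j x ∂(polK π2 s)) := fun s =>
    summable_of_geom_bound hγ0' hγ1 (fun j => hHb j s)
  -- pointwise identity for the integrand
  have hFeq : ∀ s, (∫ a, Qval P (fun _ => π2) γ R (s, a) ∂π1 s)
      - (∫ a, Qval P (fun _ => π2) γ R (s, a) ∂π2 s)
      = ∑' j, γ ^ j * ((∫ x, gfun P π2 R j x ∂(polK π1 s))
        - ∫ x, gfun P π2 R j x ∂(polK π2 s)) := by
    intro s
    have hs1 : Summable fun j => γ ^ j * ∫ x, gfun P π2 R j x ∂(polK π1 s) :=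
      summable_of_geom_bound hγ0' hγ1 (fun j =>
        norm_mul_pow_le hγ0' (norm_integral_gfun_polK_le π1 hRmeas hR0 hRC j s) j)
    have hs2 : Summable fun j => γ ^ j * ∫ x, gfun P π2 R j x ∂(polK π2 s) :=
      summable_of_geom_bound hγ0' hγ1 (fun j =>
        norm_mul_pow_le hγ0' (norm_integral_gfun_polK_le π2 hRmeas hR0 hRC j s) j)
    rw [integral_Qval π1 hγ0' hγ1 hRmeas hR0 hRC s,
      integral_Qval π2 hγ0' hγ1 hRmeas hR0 hRC s, ← Summable.tsum_sub hs1 hs2]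
    exact tsum_congr fun j => (mul_sub _ _ _).symm
  -- rewrite the occupancy integral
  simp only [hFeq]
  unfold stateOcc
  rw [integral_smul_measure, ENNReal.toReal_ofReal (by linarith : (0 : ℝ) ≤ 1 - γ)]
  haveI hfin : IsFiniteMeasure (Measure.sum fun i =>
      ENNReal.ofReal (γ ^ i) • (saLaw P (fun _ => π1) μ0 i).map Prod.fst) := by
    constructor
    rw [Measure.sum_apply _ MeasurableSet.univ]
    have huniv : ∀ i, (ENNReal.ofReal (γ ^ i)
        • (saLaw P (fun _ => π1) μ0 i).map Prod.fst) Set.univ = ENNReal.ofReal (γ ^ i) := by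
      intro i
      haveI := hνprob i
      rw [Measure.smul_apply, measure_univ, smul_eq_mul, mul_one]
    rw [tsum_congr huniv]
    have hne : (∑' i : ℕ, ENNReal.ofReal (γ ^ i)) ≠ ⊤ := by
      have hrw : ∀ i : ℕ, ENNReal.ofReal (γ ^ i) = ENNReal.ofReal γ ^ i := fun i =>
        ENNReal.ofReal_pow hγ0' i
      simp_rw [hrw]
      rw [ENNReal.tsum_geometric]
      refine ENNReal.inv_ne_top.mpr fun hzero => ?_
      exact absurd (tsub_eq_zero_iff_le.mp hzero)
        (not_le.mpr (ENNReal.ofReal_lt_one.mpr hγ1))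
    exact lt_top_iff_ne_top.mpr hne
  have hFmeas : Measurable fun s => ∑' j, γ ^ j * ((∫ x, gfun P π2 R j x ∂(polK π1 s))
      - ∫ x, gfun P π2 R j x ∂(polK π2 s)) :=
    measurable_tsum_real hHm hHsum
  have hFint : Integrable (fun s => ∑' j, γ ^ j * ((∫ x, gfun P π2 R j x ∂(polK π1 s))
      - ∫ x, gfun P π2 R j x ∂(polK π2 s)))
      (Measure.sum fun i =>
        ENNReal.ofReal (γ ^ i) • (saLaw P (fun _ => π1) μ0 i).map Prod.fst) := by
    refine Integrable.mono' (integrable_const ((1 - γ)⁻¹ * (2 * C)))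
      hFmeas.aestronglyMeasurable (Filter.Eventually.of_forall fun s => ?_)
    exact norm_tsum_le_geom hγ0' hγ1 (fun j => hHb j s)
  rw [integral_sum_measure hFint]
  congr 1
  -- evaluate each summand
  have hI : ∀ i, (∫ s, (∑' j, γ ^ j * ((∫ x, gfun P π2 R j x ∂(polK π1 s))
        - ∫ x, gfun P π2 R j x ∂(polK π2 s)))
        ∂(ENNReal.ofReal (γ ^ i) • (saLaw P (fun _ => π1) μ0 i).map Prod.fst))
      = γ ^ i * ∑' j, γ ^ j * ((∫ x, gfun P π2 R j x ∂(saLaw P (fun _ => π1) μ0 i))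
        - ∫ x, gfun P π2 R j x
          ∂(((saLaw P (fun _ => π1) μ0 i).map Prod.fst).bind (polK π2))) := by
    intro i
    haveI := hρprob i
    haveI := hνprob i
    rw [integral_smul_measure, ENNReal.toReal_ofReal (pow_nonneg hγ0' i)]
    congr 1
    rw [integral_tsum (f := fun j s => γ ^ j * ((∫ x, gfun P π2 R j x ∂(polK π1 s))
        - ∫ x, gfun P π2 R j x ∂(polK π2 s)))
      (fun j => (hHm j).aestronglyMeasurable)
      (tsum_lintegral_norm_ne_top (D := 2 * C) hγ0' hγ1 (fun j s => hHb j s))]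
    refine tsum_congr fun j => ?_
    rw [integral_const_mul]
    congr 1
    have hint1 : Integrable (fun s => ∫ x, gfun P π2 R j x ∂(polK π1 s))
        ((saLaw P (fun _ => π1) μ0 i).map Prod.fst) :=
      integrable_of_bounds _ (hD1m j) (fun s => integral_nonneg (hg0 j))
        (fun s => integral_le_of_bounds _ (hgm j) (hg0 j) (hgC j))
    have hint2 : Integrable (fun s => ∫ x, gfun P π2 R j x ∂(polK π2 s))
        ((saLaw P (fun _ => π1) μ0 i).map Prod.fst) :=
      integrable_of_bounds _ (hD2m j) (fun s => integral_nonneg (hg0 j))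
        (fun s => integral_le_of_bounds _ (hgm j) (hg0 j) (hgC j))
    rw [integral_sub hint1 hint2]
    congr 1
    · rw [← integral_bind_kernel ((saLaw P (fun _ => π1) μ0 i).map Prod.fst) (polK π1)
        (hgm j) (hg0 j) (hgC j), hmarg i]
    · rw [← integral_bind_kernel ((saLaw P (fun _ => π1) μ0 i).map Prod.fst) (polK π2)
        (hgm j) (hg0 j) (hgC j)]
  rw [tsum_congr hI]
  -- the series endgame
  have hbnd_a : ∀ i j, ‖∫ x, gfun P π2 R j x ∂(saLaw P (fun _ => π1) μ0 i)‖ ≤ C := by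
    intro i j
    haveI := hρprob i
    rw [Real.norm_eq_abs, abs_of_nonneg (integral_nonneg (hg0 j))]
    exact integral_le_of_bounds _ (hgm j) (hg0 j) (hgC j)
  have hbnd_b : ∀ i j, ‖∫ x, gfun P π2 R j x
      ∂(((saLaw P (fun _ => π1) μ0 i).map Prod.fst).bind (polK π2))‖ ≤ C := by
    intro i j
    haveI := hνprob i
    haveI : IsProbabilityMeasure
        (((saLaw P (fun _ => π1) μ0 i).map Prod.fst).bind (polK π2)) :=
      isProbabilityMeasure_bind' _ _
    rw [Real.norm_eq_abs, abs_of_nonneg (integral_nonneg (hg0 j))]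
    exact integral_le_of_bounds _ (hgm j) (hg0 j) (hgC j)
  have h0key : ∀ i, (∫ x, gfun P π2 R 0 x ∂(saLaw P (fun _ => π1) μ0 i))
      = ∫ sa, R sa ∂(saLaw P (fun _ => π1) μ0 i) := by
    intro i
    simp only [gfun_zero hRmeas]
  have hkey : ∀ i j, (∫ x, gfun P π2 R (j + 1) x ∂(saLaw P (fun _ => π1) μ0 i))
      = ∫ x, gfun P π2 R j x
        ∂(((saLaw P (fun _ => π1) μ0 (i + 1)).map Prod.fst).bind (polK π2)) := by
    intro i j
    haveI := hρprob i
    calc (∫ x, gfun P π2 R (j + 1) x ∂(saLaw P (fun _ => π1) μ0 i))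
        = ∫ sa, (∫ x, gfun P π2 R j x ∂(stepK P π2 sa)) ∂(saLaw P (fun _ => π1) μ0 i) := by
          simp only [gfun_succ hRmeas hR0 hRC]
      _ = ∫ x, gfun P π2 R j x ∂((saLaw P (fun _ => π1) μ0 i).bind (stepK P π2)) :=
          (integral_bind_kernel _ (stepK P π2) (hgm j) (hg0 j) (hgC j)).symm
      _ = ∫ x, gfun P π2 R j x
          ∂(((saLaw P (fun _ => π1) μ0 (i + 1)).map Prod.fst).bind (polK π2)) := by
          rw [bind_stepK, hfstS i]
  have hJ2 : retJ P (fun _ => π2) μ0 γ R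
      = ∑' j, γ ^ j * ∫ x, gfun P π2 R j x
        ∂(((saLaw P (fun _ => π1) μ0 0).map Prod.fst).bind (polK π2)) := by
    refine tsum_congr fun j => ?_
    congr 1
    rw [hfst0]
    haveI : IsProbabilityMeasure (μ0.bind ⇑(polK π2)) := isProbabilityMeasure_bind' μ0 _
    rw [saLaw_eq P π2 μ0 j,
      integral_bind_kernel (μ0.bind (polK π2)) (iterK P π2 j) hRmeas hR0 hRC]
    rfl
  have hfinal := series_endgame (C := C) hγ0' hγ1
    (fun i j => ∫ x, gfun P π2 R j x ∂(saLaw P (fun _ => π1) μ0 i))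
    (fun i j => ∫ x, gfun P π2 R j x
      ∂(((saLaw P (fun _ => π1) μ0 i).map Prod.fst).bind (polK π2)))
    (fun i => ∫ sa, R sa ∂(saLaw P (fun _ => π1) μ0 i))
    (retJ P (fun _ => π2) μ0 γ R)
    hbnd_a hbnd_b h0key hkey hJ2
  rw [hfinal]
  rfl
end
end

section
/- From advantage to optimality: suppose μ_c is a probability measure on S such that μ_{π̃} is absolutely continuous with respect to μ_c for every non-stationary optimal policy π̃ (i.e., every non-stationary policy with J_{π̃} = J*). If a stationary policy π̂ satisfies ⟨μ_c, Q*(·, π̂) − Q*(·, π*_e)⟩ = 0, then π̂ is optimal: J_{π̂} = J*. -/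
open MeasureTheory ProbabilityTheory Filter Set

set_option linter.unusedSectionVars false
noncomputable section

variable {S A : Type*} [MeasurableSpace S] [MeasurableSpace A]

section Aux
variable {P : Kernel (S × A) S} [IsMarkovKernel P]

/-- kernel s ↦ law of (s, a) with a ~ κ s -/
def initK (κ : Kernel S A) : Kernel S (S × A) := Kernel.id ×ₖ κ

instance (κ : Kernel S A) [IsMarkovKernel κ] : IsMarkovKernel (initK κ) := by
  rw [initK]; infer_instance

lemma initK_apply (κ : Kernel S A) [IsMarkovKernel κ] (s : S) :
    initK κ s = (κ s).map (fun a => (s, a)) := by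
  rw [initK, Kernel.prod_apply, Kernel.id_apply, Measure.dirac_prod]

lemma isProbabilityMeasure_bind {α β : Type*} [MeasurableSpace α] [MeasurableSpace β]
    (μ : Measure α) [IsProbabilityMeasure μ] (K : Kernel α β) [IsMarkovKernel K] :
    IsProbabilityMeasure (μ.bind K) := by
  constructor
  rw [Measure.bind_apply MeasurableSet.univ (Kernel.measurable K).aemeasurable]
  simp

lemma mdpInit_eq (κ : Kernel S A) [IsMarkovKernel κ] (μ : Measure S) :
    mdpInit κ μ = μ.bind (initK κ) := by
  rw [mdpInit]
  congr 1
  funext s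
  rw [initK_apply]

lemma mdpStep_eq (κ : Kernel S A) [IsMarkovKernel κ] (ρ : Measure (S × A)) :
    mdpStep P κ ρ = ρ.bind ((initK κ) ∘ₖ P) := by
  rw [mdpStep]
  congr 1
  funext sa
  rw [Kernel.comp_apply]
  congr 1
  funext s'
  rw [initK_apply]

/-- the kernel mapping (s₀,a₀) to the law of (s_i, a_i) under policy π (π 0 unused) -/
def polK (P : Kernel (S × A) S) (π : ℕ → Kernel S A) : ℕ → Kernel (S × A) (S × A)
  | 0 => Kernel.id
  | i + 1 => ((initK (π (i + 1))) ∘ₖ P) ∘ₖ (polK P π i)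

lemma polK_markov (π : ℕ → Kernel S A) (hπ : ∀ i, IsMarkovKernel (π i)) (i : ℕ) :
    IsMarkovKernel (polK P π i) := by
  induction i with
  | zero => rw [polK]; infer_instance
  | succ n ih => rw [polK]; haveI := hπ (n + 1); infer_instance

lemma saLawFrom_eq_bind (π : ℕ → Kernel S A) (hπ : ∀ i, IsMarkovKernel (π i))
    (ρ : Measure (S × A)) (i : ℕ) :
    saLawFrom P π ρ i = ρ.bind (polK P π i) := by
  induction i with
  | zero =>
    rw [saLawFrom, polK]
    have : ⇑(Kernel.id : Kernel (S × A) (S × A)) = Measure.dirac := by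
      funext x; rw [Kernel.id_apply]
    rw [this, Measure.bind_dirac]
  | succ n ih =>
    haveI := hπ (n + 1)
    rw [saLawFrom, ih, mdpStep_eq, polK,
      Measure.bind_bind (Kernel.measurable _).aemeasurable (Kernel.measurable _).aemeasurable]
    congr 1

lemma saLaw_eq_from (π : ℕ → Kernel S A) (μ0 : Measure S) (i : ℕ) :
    saLaw P π μ0 i = saLawFrom P π (mdpInit (π 0) μ0) i := by
  induction i with
  | zero => rfl
  | succ n ih => rw [saLaw, saLawFrom, ih]

section IntegralLemmas
variable {α β : Type*} [MeasurableSpace α] [MeasurableSpace β]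

lemma integrable_of_bounds (μ : Measure α) [IsFiniteMeasure μ] {f : α → ℝ} {C : ℝ}
    (hf : Measurable f) (h0 : ∀ b, 0 ≤ f b) (hC : ∀ b, f b ≤ C) : Integrable f μ := by
  refine (integrable_const C).mono' hf.aestronglyMeasurable (ae_of_all _ fun b => ?_)
  rw [Real.norm_eq_abs, abs_of_nonneg (h0 b)]
  exact hC b

lemma integral_le_of_bounds (μ : Measure α) [IsProbabilityMeasure μ] {f : α → ℝ} {C : ℝ}
    (hf : Measurable f) (h0 : ∀ b, 0 ≤ f b) (hC : ∀ b, f b ≤ C) : ∫ a, f a ∂μ ≤ C := by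
  calc ∫ a, f a ∂μ ≤ ∫ _, C ∂μ :=
        integral_mono (integrable_of_bounds μ hf h0 hC) (integrable_const C) hC
    _ = C := by simp

lemma measurable_integral_kernel (K : Kernel α β) [IsMarkovKernel K] {f : β → ℝ}
    (hf : Measurable f) (h0 : ∀ b, 0 ≤ f b) :
    Measurable fun a => ∫ b, f b ∂(K a) := by
  have heq : (fun a => ∫ b, f b ∂(K a)) =
      fun a => (∫⁻ b, ENNReal.ofReal (f b) ∂(K a)).toReal := by
    funext a
    exact integral_eq_lintegral_of_nonneg_ae (ae_of_all _ h0) hf.aestronglyMeasurable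
  rw [heq]
  exact (Measurable.lintegral_kernel hf.ennreal_ofReal).ennreal_toReal

lemma integral_bind_kernel (μ : Measure α) [IsProbabilityMeasure μ] (K : Kernel α β)
    [IsMarkovKernel K] {f : β → ℝ} {C : ℝ} (hf : Measurable f) (h0 : ∀ b, 0 ≤ f b)
    (hC : ∀ b, f b ≤ C) :
    ∫ b, f b ∂(μ.bind K) = ∫ a, (∫ b, f b ∂(K a)) ∂μ := by
  haveI := isProbabilityMeasure_bind μ K
  have hfin : ∀ a, (∫⁻ b, ENNReal.ofReal (f b) ∂(K a)) < ⊤ := by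
    intro a
    calc ∫⁻ b, ENNReal.ofReal (f b) ∂(K a) ≤ ∫⁻ _, ENNReal.ofReal C ∂(K a) :=
          lintegral_mono fun b => ENNReal.ofReal_le_ofReal (hC b)
      _ = ENNReal.ofReal C := by simp
      _ < ⊤ := ENNReal.ofReal_lt_top
  rw [integral_eq_lintegral_of_nonneg_ae (ae_of_all _ h0) hf.aestronglyMeasurable,
    Measure.lintegral_bind (Kernel.measurable K).aemeasurable hf.ennreal_ofReal.aemeasurable]
  have heq : (fun a => ∫ b, f b ∂(K a)) =
      fun a => (∫⁻ b, ENNReal.ofReal (f b) ∂(K a)).toReal := by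
    funext a
    exact integral_eq_lintegral_of_nonneg_ae (ae_of_all _ h0) hf.aestronglyMeasurable
  rw [heq, integral_toReal ((Measurable.lintegral_kernel hf.ennreal_ofReal).aemeasurable)
    (ae_of_all _ hfin)]

end IntegralLemmas

section Vals
variable {P : Kernel (S × A) S} [IsMarkovKernel P] {γ Rmax : ℝ} {R : S × A → ℝ}

lemma summable_disc (hγ0 : 0 < γ) (hγ1 : γ < 1) {c : ℕ → ℝ} (h0 : ∀ i, 0 ≤ c i)
    (hC : ∀ i, c i ≤ Rmax) : Summable fun i => γ ^ i * c i := by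
  refine Summable.of_nonneg_of_le (fun i => mul_nonneg (pow_nonneg hγ0.le i) (h0 i))
    (fun i => mul_le_mul_of_nonneg_left (hC i) (pow_nonneg hγ0.le i)) ?_
  exact (summable_geometric_of_lt_one hγ0.le hγ1).mul_right Rmax

lemma tsum_disc_le (hγ0 : 0 < γ) (hγ1 : γ < 1) {c : ℕ → ℝ} (h0 : ∀ i, 0 ≤ c i)
    (hC : ∀ i, c i ≤ Rmax) : (∑' i, γ ^ i * c i) ≤ Rmax * (1 - γ)⁻¹ := by
  have h1 : (∑' i : ℕ, γ ^ i * Rmax) = Rmax * (1 - γ)⁻¹ := by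
    rw [tsum_mul_right, tsum_geometric_of_lt_one hγ0.le hγ1, mul_comm]
  rw [← h1]
  exact Summable.tsum_le_tsum (fun i => mul_le_mul_of_nonneg_left (hC i) (pow_nonneg hγ0.le i))
    (summable_disc hγ0 hγ1 h0 hC) (summable_disc hγ0 hγ1 (fun _ => le_trans (h0 0) (hC 0))
      (fun _ => le_refl Rmax))

variable (hRmeas : Measurable R) (hR0 : ∀ sa, 0 ≤ R sa) (hR1 : ∀ sa, R sa ≤ Rmax)

include hRmeas hR0 hR1

lemma measurable_polK_integral (π : ℕ → Kernel S A) (hπ : ∀ i, IsMarkovKernel (π i)) (i : ℕ) :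
    Measurable fun sa => ∫ x, R x ∂(polK P π i sa) := by
  haveI := polK_markov (P := P) π hπ i
  exact measurable_integral_kernel _ hRmeas hR0

lemma polK_integral_nonneg (π : ℕ → Kernel S A) (i : ℕ) (sa : S × A) :
    0 ≤ ∫ x, R x ∂(polK P π i sa) := integral_nonneg hR0

lemma polK_integral_le (π : ℕ → Kernel S A) (hπ : ∀ i, IsMarkovKernel (π i)) (i : ℕ)
    (sa : S × A) : ∫ x, R x ∂(polK P π i sa) ≤ Rmax := by
  haveI := polK_markov (P := P) π hπ i
  haveI : IsProbabilityMeasure (polK P π i sa) := IsMarkovKernel.isProbabilityMeasure sa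
  exact integral_le_of_bounds _ hRmeas hR0 hR1

lemma Qval_eq (π : ℕ → Kernel S A) (hπ : ∀ i, IsMarkovKernel (π i)) (sa : S × A) :
    Qval P π γ R sa = ∑' i, γ ^ i * ∫ x, R x ∂(polK P π i sa) := by
  rw [Qval]
  congr 1
  funext i
  rw [saLawFrom_eq_bind π hπ, Measure.dirac_bind (Kernel.measurable _)]

lemma Qval_nonneg (π : ℕ → Kernel S A) (hπ : ∀ i, IsMarkovKernel (π i)) (hγ0 : 0 < γ)
    (sa : S × A) : 0 ≤ Qval P π γ R sa := by
  rw [Qval_eq hRmeas hR0 hR1 π hπ]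
  · exact tsum_nonneg fun i => mul_nonneg (pow_nonneg hγ0.le i)
      (polK_integral_nonneg hRmeas hR0 hR1 π i sa)

lemma Qval_le (π : ℕ → Kernel S A) (hπ : ∀ i, IsMarkovKernel (π i)) (hγ0 : 0 < γ)
    (hγ1 : γ < 1) (sa : S × A) : Qval P π γ R sa ≤ Rmax * (1 - γ)⁻¹ := by
  rw [Qval_eq hRmeas hR0 hR1 π hπ]
  exact tsum_disc_le hγ0 hγ1 (fun i => polK_integral_nonneg hRmeas hR0 hR1 π i sa)
    (fun i => polK_integral_le hRmeas hR0 hR1 π hπ i sa)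

lemma Qval_measurable (π : ℕ → Kernel S A) (hπ : ∀ i, IsMarkovKernel (π i)) (hγ0 : 0 < γ)
    (hγ1 : γ < 1) : Measurable (Qval P π γ R) := by
  have heq : Qval P π γ R = fun sa => ∑' i, γ ^ i * ∫ x, R x ∂(polK P π i sa) := by
    funext sa; exact Qval_eq hRmeas hR0 hR1 π hπ sa
  rw [heq]
  have hmeas : ∀ n, Measurable fun sa =>
      ∑ i ∈ Finset.range n, γ ^ i * ∫ x, R x ∂(polK P π i sa) := by
    intro n
    exact Finset.measurable_sum _ fun i _ =>
      (measurable_polK_integral hRmeas hR0 hR1 π hπ i).const_mul _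
  refine measurable_of_tendsto_metrizable hmeas (tendsto_pi_nhds.2 fun sa => ?_)
  exact (summable_disc hγ0 hγ1 (fun i => polK_integral_nonneg hRmeas hR0 hR1 π i sa)
    (fun i => polK_integral_le hRmeas hR0 hR1 π hπ i sa)).hasSum.tendsto_sum_nat

lemma integral_Qval (π : ℕ → Kernel S A) (hπ : ∀ i, IsMarkovKernel (π i)) (hγ0 : 0 < γ)
    (hγ1 : γ < 1) (ρ : Measure (S × A)) [IsProbabilityMeasure ρ] :
    ∫ sa, Qval P π γ R sa ∂ρ = ∑' i, γ ^ i * ∫ x, R x ∂(saLawFrom P π ρ i) := by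
  have heq : ∀ sa, Qval P π γ R sa = ∑' i, γ ^ i * ∫ x, R x ∂(polK P π i sa) :=
    Qval_eq hRmeas hR0 hR1 π hπ
  have hint : ∀ i : ℕ, Integrable (fun sa => γ ^ i * ∫ x, R x ∂(polK P π i sa)) ρ := by
    intro i
    exact (integrable_of_bounds ρ (measurable_polK_integral hRmeas hR0 hR1 π hπ i)
      (fun sa => polK_integral_nonneg hRmeas hR0 hR1 π i sa)
      (fun sa => polK_integral_le hRmeas hR0 hR1 π hπ i sa)).const_mul _
  have hc0 : ∀ i : ℕ, 0 ≤ ∫ sa, ∫ x, R x ∂(polK P π i sa) ∂ρ :=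
    fun i => integral_nonneg fun sa => polK_integral_nonneg hRmeas hR0 hR1 π i sa
  have hc1 : ∀ i : ℕ, (∫ sa, ∫ x, R x ∂(polK P π i sa) ∂ρ) ≤ Rmax := fun i =>
    integral_le_of_bounds ρ (measurable_polK_integral hRmeas hR0 hR1 π hπ i)
      (fun sa => polK_integral_nonneg hRmeas hR0 hR1 π i sa)
      (fun sa => polK_integral_le hRmeas hR0 hR1 π hπ i sa)
  have hnorm : ∀ i : ℕ, (∫ sa, ‖γ ^ i * ∫ x, R x ∂(polK P π i sa)‖ ∂ρ) =
      γ ^ i * ∫ sa, ∫ x, R x ∂(polK P π i sa) ∂ρ := by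
    intro i
    rw [← integral_const_mul]
    congr 1
    funext sa
    rw [Real.norm_eq_abs, abs_of_nonneg
      (mul_nonneg (pow_nonneg (by positivity : (0:ℝ) ≤ γ) i) (polK_integral_nonneg hRmeas hR0 hR1 π i sa))]
  have hsum : Summable fun i : ℕ =>
      ∫ sa, ‖γ ^ i * ∫ x, R x ∂(polK P π i sa)‖ ∂ρ := by
    refine Summable.congr (summable_disc hγ0 hγ1 hc0 hc1) fun i => (hnorm i).symm
  have hswap := integral_tsum_of_summable_integral_norm hint hsum
  have hL : ∫ sa, Qval P π γ R sa ∂ρ =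
      ∫ sa, (∑' i, γ ^ i * ∫ x, R x ∂(polK P π i sa)) ∂ρ := by
    congr 1; funext sa; exact heq sa
  rw [hL, ← hswap]
  congr 1
  funext i
  haveI := polK_markov (P := P) π hπ i
  rw [integral_const_mul, saLawFrom_eq_bind π hπ,
    integral_bind_kernel (C := Rmax) ρ (polK P π i) hRmeas hR0 hR1]

omit hRmeas hR0 hR1

lemma saLawFrom_prob (π : ℕ → Kernel S A) (hπ : ∀ i, IsMarkovKernel (π i))
    (ρ : Measure (S × A)) [IsProbabilityMeasure ρ] (i : ℕ) :
    IsProbabilityMeasure (saLawFrom P π ρ i) := by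
  rw [saLawFrom_eq_bind π hπ]
  haveI := polK_markov (P := P) π hπ i
  exact isProbabilityMeasure_bind ρ (polK P π i)

lemma mdpInit_prob (κ : Kernel S A) [IsMarkovKernel κ] (μ : Measure S)
    [IsProbabilityMeasure μ] : IsProbabilityMeasure (mdpInit κ μ) := by
  rw [mdpInit_eq]
  exact isProbabilityMeasure_bind μ (initK κ)

lemma saLaw_prob (π : ℕ → Kernel S A) (hπ : ∀ i, IsMarkovKernel (π i))
    (μ0 : Measure S) [IsProbabilityMeasure μ0] (i : ℕ) :
    IsProbabilityMeasure (saLaw P π μ0 i) := by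
  rw [saLaw_eq_from]
  haveI := hπ 0
  haveI := mdpInit_prob (π 0) μ0
  exact saLawFrom_prob π hπ _ i

lemma saLaw_shift (π : ℕ → Kernel S A) (μ0 : Measure S) (k j : ℕ) :
    saLaw P π μ0 (k + j) = saLawFrom P (fun i => π (k + i)) (saLaw P π μ0 k) j := by
  induction j with
  | zero => rfl
  | succ n ih =>
    have h : k + (n + 1) = (k + n) + 1 := by omega
    rw [h, saLaw, ih]
    rfl

lemma saLaw_congr (π π' : ℕ → Kernel S A) (μ0 : Measure S) (k : ℕ)
    (h : ∀ j ≤ k, π j = π' j) : saLaw P π μ0 k = saLaw P π' μ0 k := by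
  induction k with
  | zero => rw [saLaw, saLaw, h 0 (le_refl 0)]
  | succ n ih =>
    rw [saLaw, saLaw, h (n + 1) (le_refl _), ih fun j hj => h j (by omega)]

lemma polK_congr (π π' : ℕ → Kernel S A) (h : ∀ i, 1 ≤ i → π i = π' i) (k : ℕ) :
    polK P π k = polK P π' k := by
  induction k with
  | zero => rfl
  | succ n ih => rw [polK, polK, h (n + 1) (by omega), ih]

lemma Qval_congr (π π' : ℕ → Kernel S A) (h : ∀ i, 1 ≤ i → π i = π' i) :
    Qval P π γ R = Qval P π' γ R := by
  funext sa
  rw [Qval, Qval]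
  congr 1
  funext i
  have : ∀ j, saLawFrom P π (Measure.dirac sa) j = saLawFrom P π' (Measure.dirac sa) j := by
    intro j
    induction j with
    | zero => rfl
    | succ n ih => rw [saLawFrom, saLawFrom, h (n + 1) (by omega), ih]
  rw [this]

lemma retJ_split (π : ℕ → Kernel S A) (hπ : ∀ i, IsMarkovKernel (π i)) (hγ0 : 0 < γ)
    (hγ1 : γ < 1) (hRmeas : Measurable R) (hR0 : ∀ sa, 0 ≤ R sa) (hR1 : ∀ sa, R sa ≤ Rmax)
    (μ0 : Measure S) [IsProbabilityMeasure μ0] (k : ℕ) :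
    retJ P π μ0 γ R = (∑ i ∈ Finset.range k, γ ^ i * ∫ sa, R sa ∂(saLaw P π μ0 i)) +
      γ ^ k * ∫ sa, Qval P (fun i => π (k + i)) γ R sa ∂(saLaw P π μ0 k) := by
  have hb : ∀ i, (0 ≤ ∫ sa, R sa ∂(saLaw P π μ0 i)) ∧ (∫ sa, R sa ∂(saLaw P π μ0 i)) ≤ Rmax := by
    intro i
    haveI := saLaw_prob (P := P) π hπ μ0 i
    exact ⟨integral_nonneg hR0, integral_le_of_bounds _ hRmeas hR0 hR1⟩
  have hsum : Summable fun i => γ ^ i * ∫ sa, R sa ∂(saLaw P π μ0 i) :=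
    summable_disc hγ0 hγ1 (fun i => (hb i).1) (fun i => (hb i).2)
  rw [retJ, ← Summable.sum_add_tsum_nat_add k hsum]
  congr 1
  haveI := saLaw_prob (P := P) π hπ μ0 k
  rw [integral_Qval hRmeas hR0 hR1 _ (fun i => hπ (k + i)) hγ0 hγ1, ← tsum_mul_left]
  congr 1
  funext j
  rw [← saLaw_shift, ← mul_assoc, ← pow_add, add_comm j k]

lemma map_fst_bind_initK (μ : Measure S) (κ : Kernel S A) [IsMarkovKernel κ] :
    (μ.bind (initK κ)).map Prod.fst = μ := by
  ext t ht
  rw [Measure.map_apply measurable_fst ht,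
    Measure.bind_apply (measurable_fst ht) (Kernel.measurable _).aemeasurable]
  have h : ∀ s, (initK κ) s (Prod.fst ⁻¹' t) = t.indicator (fun _ => 1) s := by
    intro s
    rw [initK_apply, Measure.map_apply measurable_prodMk_left (measurable_fst ht)]
    by_cases h : s ∈ t
    · have he : (fun a : A => (s, a)) ⁻¹' (Prod.fst ⁻¹' t) = Set.univ := by ext a; simp [h]
      simp [he, h]
    · have he : (fun a : A => (s, a)) ⁻¹' (Prod.fst ⁻¹' t) = ∅ := by ext a; simp [h]
      simp [he, h]
  simp_rw [h]
  rw [lintegral_indicator ht]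
  simp

lemma mdpStep_eq' (κ : Kernel S A) [IsMarkovKernel κ] (ρ : Measure (S × A)) :
    mdpStep P κ ρ = (ρ.bind ⇑P).bind (initK κ) := by
  rw [mdpStep_eq, Measure.bind_bind (Kernel.measurable P).aemeasurable (Kernel.measurable _).aemeasurable]
  congr 1

lemma saLaw_zero_eq (π : ℕ → Kernel S A) (hπ : ∀ i, IsMarkovKernel (π i)) (μ0 : Measure S) :
    saLaw P π μ0 0 = μ0.bind (initK (π 0)) := by
  haveI := hπ 0
  rw [saLaw, mdpInit_eq]

lemma saLaw_succ_eq (π : ℕ → Kernel S A) (hπ : ∀ i, IsMarkovKernel (π i)) (μ0 : Measure S)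
    (k : ℕ) : saLaw P π μ0 (k + 1) = ((saLaw P π μ0 k).bind ⇑P).bind (initK (π (k + 1))) := by
  haveI := hπ (k + 1)
  rw [saLaw, mdpStep_eq']

lemma map_fst_saLaw_zero (π : ℕ → Kernel S A) (hπ : ∀ i, IsMarkovKernel (π i))
    (μ0 : Measure S) : (saLaw P π μ0 0).map Prod.fst = μ0 := by
  haveI := hπ 0
  rw [saLaw_zero_eq π hπ, map_fst_bind_initK]

lemma map_fst_saLaw_succ (π : ℕ → Kernel S A) (hπ : ∀ i, IsMarkovKernel (π i))
    (μ0 : Measure S) (k : ℕ) :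
    (saLaw P π μ0 (k + 1)).map Prod.fst = (saLaw P π μ0 k).bind ⇑P := by
  haveI := hπ (k + 1)
  rw [saLaw_succ_eq π hπ, map_fst_bind_initK]

lemma integral_bind_initK (ν : Measure S) [IsProbabilityMeasure ν] (κ : Kernel S A)
    [IsMarkovKernel κ] {f : S × A → ℝ} {C : ℝ} (hf : Measurable f) (h0 : ∀ x, 0 ≤ f x)
    (hC : ∀ x, f x ≤ C) :
    ∫ x, f x ∂(ν.bind (initK κ)) = ∫ s, ∫ a, f (s, a) ∂(κ s) ∂ν := by
  rw [integral_bind_kernel ν (initK κ) hf h0 hC]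
  congr 1
  funext s
  rw [initK_apply, integral_map measurable_prodMk_left.aemeasurable
    hf.aestronglyMeasurable]

lemma measurable_kernel_prod (κ : Kernel S A) [IsMarkovKernel κ] {f : S × A → ℝ}
    (hf : Measurable f) (h0 : ∀ x, 0 ≤ f x) :
    Measurable fun s => ∫ a, f (s, a) ∂(κ s) := by
  have h := measurable_integral_kernel (initK κ) hf h0
  have heq : (fun s => ∫ x, f x ∂(initK κ s)) = fun s => ∫ a, f (s, a) ∂(κ s) := by
    funext s
    rw [initK_apply, integral_map measurable_prodMk_left.aemeasurable
      hf.aestronglyMeasurable]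
  rw [heq] at h
  exact h

end Vals
/-- **From advantage to optimality**: if `μ_c` dominates the occupancy of every
non-stationary optimal policy and `⟨μ_c, Q*(·, π̂) - Q*(·, π*_e)⟩ = 0`, then `J_{π̂} = J*`. -/
theorem advantage_to_optimality
    (P : Kernel (S × A) S) [IsMarkovKernel P]
    (πe πhat : Kernel S A) [IsMarkovKernel πe] [IsMarkovKernel πhat]
    (μ0 : Measure S) [IsProbabilityMeasure μ0]
    (γ : ℝ) (hγ : γ ∈ Set.Ioo (0 : ℝ) 1)
    (Rmax : ℝ) (R : S × A → ℝ) (hRmeas : Measurable R)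
    (hRrange : ∀ sa, R sa ∈ Set.Icc 0 Rmax)
    -- `π*_e` is optimal almost everywhere (over all non-stationary policies)
    (hopt : ∀ s : S, Vval P (fun _ => πe) γ R s =
      ⨆ π : {π : ℕ → Kernel S A // ∀ i, IsMarkovKernel (π i)}, Vval P π.1 γ R s)
    -- Bellman optimality equation for `Q* = Q_{π*_e}`
    (hBellman : ∀ sa : S × A, Qval P (fun _ => πe) γ R sa =
      R sa + γ * ∫ s', (⨆ a', Qval P (fun _ => πe) γ R (s', a')) ∂(P sa))
    -- `V*(s) = sup_a Q*(s, a) = Q*(s, π*_e)`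
    (hVsup : ∀ s : S, Vval P (fun _ => πe) γ R s = ⨆ a, Qval P (fun _ => πe) γ R (s, a))
    (hVpi : ∀ s : S, Vval P (fun _ => πe) γ R s = ∫ a, Qval P (fun _ => πe) γ R (s, a) ∂(πe s))
    -- the covering distribution
    (μc : Measure S) [IsProbabilityMeasure μc]
    (hcover : ∀ π : ℕ → Kernel S A, (∀ i, IsMarkovKernel (π i)) →
      retJ P π μ0 γ R = retJ P (fun _ => πe) μ0 γ R →
      stateOcc P π μ0 γ ≪ μc)
    -- zero expected advantage under `μ_c`
    (hadv : ∫ s,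
        ((∫ a, Qval P (fun _ => πe) γ R (s, a) ∂(πhat s)) -
          (∫ a, Qval P (fun _ => πe) γ R (s, a) ∂(πe s))) ∂μc = 0) :
    retJ P (fun _ => πhat) μ0 γ R = retJ P (fun _ => πe) μ0 γ R := by
  obtain ⟨hγ0, hγ1⟩ := hγ
  have hR0 : ∀ sa, 0 ≤ R sa := fun sa => (hRrange sa).1
  have hR1 : ∀ sa, R sa ≤ Rmax := fun sa => (hRrange sa).2
  have hπeM : ∀ i : ℕ, IsMarkovKernel ((fun _ : ℕ => πe) i) := fun _ => inferInstance
  set Qs : S × A → ℝ := Qval P (fun _ => πe) γ R with hQsdef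
  have hQmeas : Measurable Qs := Qval_measurable hRmeas hR0 hR1 _ hπeM hγ0 hγ1
  have hQ0 : ∀ sa, 0 ≤ Qs sa := Qval_nonneg hRmeas hR0 hR1 _ hπeM hγ0
  set M : ℝ := Rmax * (1 - γ)⁻¹ with hMdef
  have hQM : ∀ sa, Qs sa ≤ M := Qval_le hRmeas hR0 hR1 _ hπeM hγ0 hγ1
  set fhat : S → ℝ := fun s => ∫ a, Qs (s, a) ∂(πhat s) with hfhatdef
  set fe : S → ℝ := fun s => ∫ a, Qs (s, a) ∂(πe s) with hfedef
  have hfhat_meas : Measurable fhat := measurable_kernel_prod πhat hQmeas hQ0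
  have hfe_meas : Measurable fe := measurable_kernel_prod πe hQmeas hQ0
  have hfhat0 : ∀ s, 0 ≤ fhat s := fun s => integral_nonneg fun a => hQ0 _
  have hfe0 : ∀ s, 0 ≤ fe s := fun s => integral_nonneg fun a => hQ0 _
  have hfhatM : ∀ s, fhat s ≤ M := fun s => integral_le_of_bounds _
    (hQmeas.comp measurable_prodMk_left) (fun a => hQ0 _) (fun a => hQM _)
  have hfeM : ∀ s, fe s ≤ M := fun s => integral_le_of_bounds _
    (hQmeas.comp measurable_prodMk_left) (fun a => hQ0 _) (fun a => hQM _)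
  -- pointwise advantage is nonpositive
  have hle : ∀ s, fhat s ≤ fe s := by
    intro s
    have h1 : fe s = ⨆ a, Qs (s, a) := (hVpi s).symm.trans (hVsup s)
    rw [h1]
    refine integral_le_of_bounds _ (hQmeas.comp measurable_prodMk_left)
      (fun a => hQ0 _) fun a => ?_
    refine le_ciSup (f := fun a => Qs (s, a)) ⟨M, ?_⟩ a
    rintro x ⟨a', rfl⟩
    exact hQM _
  -- a.e. equality under μc
  have hint_hat : Integrable fhat μc := integrable_of_bounds μc hfhat_meas hfhat0 hfhatM
  have hint_e : Integrable fe μc := integrable_of_bounds μc hfe_meas hfe0 hfeM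
  have hzero : ∫ s, (fe s - fhat s) ∂μc = 0 := by
    have h2 : ∫ s, (fhat s - fe s) ∂μc = 0 := hadv
    rw [integral_sub hint_hat hint_e] at h2
    rw [integral_sub hint_e hint_hat]
    linarith
  have hae : ∀ᵐ s ∂μc, fe s - fhat s = 0 := by
    have := (integral_eq_zero_iff_of_nonneg (fun s => sub_nonneg.2 (hle s))
      (hint_e.sub hint_hat)).mp hzero
    filter_upwards [this] with s hs using hs
  set N : Set S := {s | fe s - fhat s ≠ 0} with hNdef
  have hNmeas : MeasurableSet N := by
    have : N = (fun s => fe s - fhat s) ⁻¹' ({0}ᶜ) := by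
      ext s; simp [hNdef]
    rw [this]
    exact (hfe_meas.sub hfhat_meas) (measurableSet_singleton (0:ℝ)).compl
  have hμcN : μc N = 0 := by
    rw [ae_iff] at hae
    simpa [hNdef] using hae
  -- the interpolating policies
  set pol : ℕ → ℕ → Kernel S A := fun k i => if i < k then πhat else πe with hpoldef
  have hpolM : ∀ k i, IsMarkovKernel (pol k i) := by
    intro k i
    simp only [hpoldef]
    split <;> infer_instance
  have hpol_lt : ∀ k i, i < k → pol k i = πhat := by
    intro k i h; simp only [hpoldef]; rw [if_pos h]
  have hpol_ge : ∀ k i, k ≤ i → pol k i = πe := by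
    intro k i h; simp only [hpoldef]; rw [if_neg (Nat.not_lt.mpr h)]
  -- the main induction
  have Hk : ∀ k, retJ P (pol k) μ0 γ R = retJ P (fun _ => πe) μ0 γ R := by
    intro k
    induction k with
    | zero =>
      have : pol 0 = fun _ => πe := funext fun i => hpol_ge 0 i (Nat.zero_le i)
      rw [this]
    | succ k ih =>
      -- the step-k state marginal is null on N
      have hterm : (saLaw P (pol k) μ0 k).map Prod.fst N = 0 := by
        have hAC : stateOcc P (pol k) μ0 γ N = 0 := hcover (pol k) (hpolM k) ih hμcN
        rw [stateOcc, Measure.smul_apply, Measure.sum_apply _ hNmeas] at hAC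
        simp only [Measure.smul_apply, smul_eq_mul] at hAC
        rcases mul_eq_zero.mp hAC with h | h
        · exact absurd h (by simp only [ne_eq, ENNReal.ofReal_eq_zero, not_le]; linarith)
        · have h3 := ENNReal.tsum_eq_zero.mp h k
          rcases mul_eq_zero.mp h3 with h4 | h4
          · exact absurd h4 (by
              simp only [ne_eq, ENNReal.ofReal_eq_zero, not_le]
              exact pow_pos hγ0 k)
          · exact h4
      -- tails of the split are evaluated through a common state measure ν
      obtain ⟨ν, hνprob, hsk, hsk1, hνN⟩ :
          ∃ ν : Measure S, IsProbabilityMeasure ν ∧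
            saLaw P (pol k) μ0 k = ν.bind (initK πe) ∧
            saLaw P (pol (k + 1)) μ0 k = ν.bind (initK πhat) ∧ ν N = 0 := by
        cases k with
        | zero =>
          refine ⟨μ0, inferInstance, ?_, ?_, ?_⟩
          · rw [saLaw_zero_eq _ (hpolM 0), hpol_ge 0 0 (le_refl 0)]
          · rw [saLaw_zero_eq _ (hpolM 1), hpol_lt 1 0 (by omega)]
          · rw [map_fst_saLaw_zero _ (hpolM 0)] at hterm
            exact hterm
        | succ m =>
          refine ⟨(saLaw P (pol (m + 1)) μ0 m).bind ⇑P, ?_, ?_, ?_, ?_⟩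
          · haveI := saLaw_prob (P := P) _ (hpolM (m + 1)) μ0 m
            exact isProbabilityMeasure_bind _ P
          · rw [saLaw_succ_eq _ (hpolM (m + 1)), hpol_ge (m + 1) (m + 1) (le_refl _)]
          · rw [saLaw_succ_eq _ (hpolM (m + 2)), hpol_lt (m + 2) (m + 1) (by omega)]
            congr 2
            exact saLaw_congr _ _ μ0 m fun j hj => by
              rw [hpol_lt (m + 2) j (by omega)]
              by_cases hjm : j < m + 1
              · rw [hpol_lt (m + 1) j hjm]
              · omega
          · rw [map_fst_saLaw_succ _ (hpolM (m + 1))] at hterm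
            exact hterm
      haveI := hνprob
      -- split both returns at time k
      rw [retJ_split (pol (k + 1)) (hpolM (k + 1)) hγ0 hγ1 hRmeas hR0 hR1 μ0 k, ← ih,
        retJ_split (pol k) (hpolM k) hγ0 hγ1 hRmeas hR0 hR1 μ0 k]
      have hheads : (∑ i ∈ Finset.range k, γ ^ i * ∫ sa, R sa ∂(saLaw P (pol (k + 1)) μ0 i)) =
          ∑ i ∈ Finset.range k, γ ^ i * ∫ sa, R sa ∂(saLaw P (pol k) μ0 i) := by
        refine Finset.sum_congr rfl fun i hi => ?_
        rw [saLaw_congr (pol (k + 1)) (pol k) μ0 i fun j hj => ?_]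
        have hj' : j < k := lt_of_le_of_lt hj (Finset.mem_range.mp hi)
        rw [hpol_lt (k + 1) j (by omega), hpol_lt k j hj']
      rw [hheads]
      congr 1
      -- identify the tail Q-functions with Qs
      have ht1 : Qval P (fun i => pol (k + 1) (k + i)) γ R = Qs := by
        rw [hQsdef]
        exact Qval_congr _ _ fun i hi => hpol_ge (k + 1) (k + i) (by omega)
      have ht2 : (fun i => pol k (k + i)) = (fun _ : ℕ => πe) :=
        funext fun i => hpol_ge k (k + i) (by omega)
      rw [ht1, ht2, ← hQsdef, hsk, hsk1,
        integral_bind_initK (C := M) ν πhat hQmeas hQ0 hQM,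
        integral_bind_initK (C := M) ν πe hQmeas hQ0 hQM]
      congr 1
      refine integral_congr_ae ?_
      have : ∀ᵐ s ∂ν, fe s - fhat s = 0 := by
        rw [ae_iff]
        exact measure_mono_null (fun s hs => by simpa [hNdef] using hs) hνN
      filter_upwards [this] with s hs
      have := sub_eq_zero.mp hs
      simp only [hfhatdef, hfedef] at this ⊢
      linarith
  -- limit argument: retJ of the stationary policy π̂
  have hbound : ∀ k : ℕ,
      |retJ P (fun _ => πhat) μ0 γ R - retJ P (fun _ => πe) μ0 γ R| ≤ γ ^ k * M := by
    intro k
    have hhatM : ∀ i : ℕ, IsMarkovKernel ((fun _ : ℕ => πhat) i) := fun _ => inferInstance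
    rw [← Hk k, retJ_split (fun _ => πhat) hhatM hγ0 hγ1 hRmeas hR0 hR1 μ0 k,
      retJ_split (pol k) (hpolM k) hγ0 hγ1 hRmeas hR0 hR1 μ0 k]
    have hheads : (∑ i ∈ Finset.range k, γ ^ i * ∫ sa, R sa ∂(saLaw P (fun _ => πhat) μ0 i)) =
        ∑ i ∈ Finset.range k, γ ^ i * ∫ sa, R sa ∂(saLaw P (pol k) μ0 i) := by
      refine Finset.sum_congr rfl fun i hi => ?_
      rw [saLaw_congr (fun _ => πhat) (pol k) μ0 i fun j hj => ?_]
      have hj' : j < k := lt_of_le_of_lt hj (Finset.mem_range.mp hi)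
      rw [hpol_lt k j hj']
    rw [hheads]
    have hT : ∀ (π : ℕ → Kernel S A) (hπ : ∀ i, IsMarkovKernel (π i)) (π' : ℕ → Kernel S A)
        (hπ' : ∀ i, IsMarkovKernel (π' i)),
        (0 ≤ ∫ sa, Qval P π' γ R sa ∂(saLaw P π μ0 k)) ∧
          (∫ sa, Qval P π' γ R sa ∂(saLaw P π μ0 k)) ≤ M := by
      intro π hπ π' hπ'
      haveI := saLaw_prob (P := P) π hπ μ0 k
      exact ⟨integral_nonneg fun sa => Qval_nonneg hRmeas hR0 hR1 π' hπ' hγ0 sa,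
        integral_le_of_bounds _ (Qval_measurable hRmeas hR0 hR1 π' hπ' hγ0 hγ1)
          (fun sa => Qval_nonneg hRmeas hR0 hR1 π' hπ' hγ0 sa)
          (fun sa => Qval_le hRmeas hR0 hR1 π' hπ' hγ0 hγ1 sa)⟩
    obtain ⟨h10, h1M⟩ := hT (fun _ => πhat) hhatM (fun i => (fun _ : ℕ => πhat) (k + i))
      (fun _ => inferInstance)
    obtain ⟨h20, h2M⟩ := hT (pol k) (hpolM k) (fun i => pol k (k + i))
      (fun i => hpolM k (k + i))
    have hγk : (0:ℝ) ≤ γ ^ k := pow_nonneg hγ0.le k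
    rw [add_sub_add_left_eq_sub, ← mul_sub, abs_mul, abs_of_nonneg hγk]
    refine mul_le_mul_of_nonneg_left ?_ hγk
    rw [abs_le]
    constructor <;> linarith
  have htend : Tendsto (fun k : ℕ => γ ^ k * M) atTop (nhds 0) := by
    have := tendsto_pow_atTop_nhds_zero_of_lt_one hγ0.le hγ1
    simpa using this.mul_const M
  have habs : |retJ P (fun _ => πhat) μ0 γ R - retJ P (fun _ => πe) μ0 γ R| ≤ 0 :=
    ge_of_tendsto' htend hbound
  have := abs_nonpos_iff.mp habs
  linarith [sub_eq_zero.mp this]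
end Aux
end
end

section
/- Let ε ≥ 0 and C > 0, and let d^D be a probability measure on S × A. For a non-stationary policy π̃, let d_{π̃,i} denote the law of (s_i, a_i) along its trajectory and d_{π̃} = (1−γ)·∑_{i≥0} γ^i d_{π̃,i}. Suppose that for every non-stationary policy π̃ with J* − J_{π̃} ≤ ε and every i ∈ ℕ, d_{π̃,i} ≤ C·d^D. Let (Θ, λ) be a probability space and (π^θ)_{θ∈Θ} a family of non-stationary policies, each satisfying J* − J_{π^θ} ≤ ε, such that θ ↦ d_{π^θ}(B) is measurable for every measurable B ⊆ S × A, and define the mixture d_c(B) = ∫_Θ d_{π^θ}(B) dλ(θ). Then d_{d_c, π*_e} ≤ C·d^D. -/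
open MeasureTheory ProbabilityTheory Filter Set

noncomputable section

variable {S A : Type*} [MeasurableSpace S] [MeasurableSpace A]

/-- Discounted state-action occupancy starting from a state-action measure `d` and then
following the stationary policy `κ`: `d_{d,κ} = (1-γ) ∑_{i≥0} γ^i P_κ^i d`. -/
def saOccFrom (P : Kernel (S × A) S) (κ : Kernel S A) (γ : ℝ) (d : Measure (S × A)) :
    Measure (S × A) :=
  ENNReal.ofReal (1 - γ) •
    Measure.sum fun i => ENNReal.ofReal (γ ^ i) • (mdpStep P κ)^[i] d

/-- Discounted state-action occupancy `d_π = (1-γ) ∑_{i≥0} γ^i d_{π,i}` of a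
(possibly non-stationary) policy `π` started at `μ0`. -/
def saOcc (P : Kernel (S × A) S) (π : ℕ → Kernel S A) (μ0 : Measure S) (γ : ℝ) :
    Measure (S × A) :=
  ENNReal.ofReal (1 - γ) •
    Measure.sum fun i => ENNReal.ofReal (γ ^ i) • saLaw P π μ0 i

namespace MDPaux

open MeasureTheory ProbabilityTheory
open scoped ENNReal

variable {S A : Type*} [MeasurableSpace S] [MeasurableSpace A]

/-- Initial kernel: from `s`, produce `(s, a)` with `a ~ κ s`. -/
noncomputable def initK (κ : Kernel S A) : Kernel S (S × A) := Kernel.id ×ₖ κ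

lemma initK_markov (κ : Kernel S A) [IsMarkovKernel κ] : IsMarkovKernel (initK κ) := by
  rw [initK]; infer_instance

lemma initK_apply (κ : Kernel S A) [IsSFiniteKernel κ] (s : S) :
    initK κ s = (κ s).map fun a => (s, a) := by
  rw [initK, Kernel.prod_apply, Kernel.id_apply, Measure.dirac_prod]

/-- Step kernel: from `(s,a)`, produce `(s', a')` with `s' ~ P (s,a)`, `a' ~ κ s'`. -/
noncomputable def stepK (P : Kernel (S × A) S) (κ : Kernel S A) : Kernel (S × A) (S × A) :=
  initK κ ∘ₖ P

lemma stepK_markov (P : Kernel (S × A) S) [IsMarkovKernel P] (κ : Kernel S A)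
    [IsMarkovKernel κ] : IsMarkovKernel (stepK P κ) := by
  haveI := initK_markov κ
  rw [stepK]; infer_instance

lemma mdpInit_eq (κ : Kernel S A) [IsSFiniteKernel κ] (μ : Measure S) :
    mdpInit κ μ = μ.bind ⇑(initK κ) :=
  congrArg (Measure.bind μ) (funext fun s => (initK_apply κ s).symm)

lemma mdpStep_eq (P : Kernel (S × A) S) (κ : Kernel S A) [IsSFiniteKernel κ]
    (ρ : Measure (S × A)) : mdpStep P κ ρ = ρ.bind ⇑(stepK P κ) := by
  refine congrArg (Measure.bind ρ) (funext fun sa => ?_)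
  rw [stepK, Kernel.comp_apply]
  exact congrArg (Measure.bind (P sa)) (funext fun s' => (initK_apply κ s').symm)

lemma mdpStep_eq' (P : Kernel (S × A) S) (κ : Kernel S A) [IsSFiniteKernel κ]
    (ρ : Measure (S × A)) : mdpStep P κ ρ = (ρ.bind ⇑P).bind ⇑(initK κ) := by
  rw [mdpStep_eq P κ ρ, Measure.bind_bind (Kernel.measurable P).aemeasurable (Kernel.measurable (initK κ)).aemeasurable]
  exact congrArg (Measure.bind ρ) (funext fun sa => (Kernel.comp_apply _ _ _))

lemma isProb_bind {α β : Type*} [MeasurableSpace α] [MeasurableSpace β]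
    (μ : Measure α) [IsProbabilityMeasure μ] (K : Kernel α β) [IsMarkovKernel K] :
    IsProbabilityMeasure (μ.bind ⇑K) := by
  constructor
  rw [Measure.bind_apply MeasurableSet.univ (Kernel.measurable K).aemeasurable]
  simp [measure_univ]

/-- The kernel representing `i` steps of the MDP starting from a state-action pair. -/
noncomputable def LK (P : Kernel (S × A) S) (σ : ℕ → Kernel S A) :
    ℕ → Kernel (S × A) (S × A)
  | 0 => Kernel.id
  | i + 1 => stepK P (σ (i + 1)) ∘ₖ LK P σ i

lemma LK_markov (P : Kernel (S × A) S) [IsMarkovKernel P] (σ : ℕ → Kernel S A)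
    (hσ : ∀ k, IsMarkovKernel (σ k)) : ∀ i, IsMarkovKernel (LK P σ i)
  | 0 => by rw [LK]; infer_instance
  | (i + 1) => by
    haveI := hσ (i + 1)
    haveI := LK_markov P σ hσ i
    haveI := stepK_markov P (σ (i + 1))
    rw [LK]; infer_instance

lemma bind_id {α : Type*} [MeasurableSpace α] (ρ : Measure α) :
    ρ.bind ⇑(Kernel.id : Kernel α α) = ρ := by
  rw [show ⇑(Kernel.id : Kernel α α) = Measure.dirac from funext Kernel.id_apply,
    Measure.bind_dirac]

lemma saLawFrom_eq_bind (P : Kernel (S × A) S) [IsMarkovKernel P] (σ : ℕ → Kernel S A)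
    (hσ : ∀ k, IsMarkovKernel (σ k)) (ρ : Measure (S × A)) :
    ∀ i, saLawFrom P σ ρ i = ρ.bind ⇑(LK P σ i)
  | 0 => (bind_id ρ).symm
  | (i + 1) => by
    haveI := hσ (i + 1)
    show mdpStep P (σ (i + 1)) (saLawFrom P σ ρ i) = _
    rw [saLawFrom_eq_bind P σ hσ ρ i, mdpStep_eq P (σ (i + 1)),
      Measure.bind_bind (Kernel.measurable _).aemeasurable (Kernel.measurable _).aemeasurable]
    exact congrArg (Measure.bind ρ) (funext fun sa => (Kernel.comp_apply _ _ _).symm)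

lemma saLawFrom_prob (P : Kernel (S × A) S) [IsMarkovKernel P] (σ : ℕ → Kernel S A)
    (hσ : ∀ k, IsMarkovKernel (σ k)) (ρ : Measure (S × A)) [IsProbabilityMeasure ρ] (i : ℕ) :
    IsProbabilityMeasure (saLawFrom P σ ρ i) := by
  rw [saLawFrom_eq_bind P σ hσ ρ i]
  haveI := LK_markov P σ hσ i
  exact isProb_bind ρ (LK P σ i)

lemma saLawFrom_congr (P : Kernel (S × A) S) (σ σ' : ℕ → Kernel S A)
    (h : ∀ k, 1 ≤ k → σ k = σ' k) (ρ : Measure (S × A)) :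
    ∀ i, saLawFrom P σ ρ i = saLawFrom P σ' ρ i
  | 0 => rfl
  | (i + 1) => by
    show mdpStep P (σ (i + 1)) _ = mdpStep P (σ' (i + 1)) _
    rw [saLawFrom_congr P σ σ' h ρ i, h (i + 1) (Nat.le_add_left 1 i)]

lemma saLaw_congr (P : Kernel (S × A) S) (σ σ' : ℕ → Kernel S A) (μ : Measure S) :
    ∀ i, (∀ k, k ≤ i → σ k = σ' k) → saLaw P σ μ i = saLaw P σ' μ i
  | 0, h => by show mdpInit (σ 0) μ = mdpInit (σ' 0) μ; rw [h 0 le_rfl]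
  | (i + 1), h => by
    show mdpStep P (σ (i + 1)) _ = mdpStep P (σ' (i + 1)) _
    rw [saLaw_congr P σ σ' μ i (fun k hk => h k (hk.trans (Nat.le_succ i))), h (i + 1) le_rfl]

lemma saLaw_eq_from (P : Kernel (S × A) S) (τ : ℕ → Kernel S A) (μ : Measure S) :
    ∀ i, saLaw P τ μ i = saLawFrom P τ (mdpInit (τ 0) μ) i
  | 0 => rfl
  | (i + 1) => by
    show mdpStep P (τ (i + 1)) _ = mdpStep P (τ (i + 1)) _
    rw [saLaw_eq_from P τ μ i]

/-- Shifted policy. -/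
def shift (σ : ℕ → Kernel S A) : ℕ → Kernel S A := fun k => σ (k + 1)

lemma saLawFrom_shift (P : Kernel (S × A) S) (σ : ℕ → Kernel S A) (ρ : Measure (S × A)) :
    ∀ i, saLawFrom P σ ρ (i + 1) = saLawFrom P (shift σ) (mdpStep P (σ 1) ρ) i
  | 0 => rfl
  | (i + 1) => by
    show mdpStep P (σ (i + 2)) (saLawFrom P σ ρ (i + 1)) = mdpStep P (shift σ (i + 1)) _
    rw [saLawFrom_shift P σ ρ i]; rfl



section Values

variable (P : Kernel (S × A) S) [IsMarkovKernel P] (γ : ℝ) (R : S × A → ℝ)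

/-- The discounted return, in `ℝ≥0∞`, of following `σ` (from step 1 on) started
at the state-action law `ρ`. -/
noncomputable def enW (σ : ℕ → Kernel S A) (ρ : Measure (S × A)) : ℝ≥0∞ :=
  ∑' i, ENNReal.ofReal γ ^ i * ∫⁻ sa, ENNReal.ofReal (R sa) ∂(saLawFrom P σ ρ i)

/-- The `ℝ≥0∞`-valued state value function. -/
noncomputable def env (τ : ℕ → Kernel S A) (s : S) : ℝ≥0∞ :=
  enW P γ R τ (initK (τ 0) s)

variable {Rmax : ℝ}

lemma lint_le (hRmax : ∀ sa, R sa ≤ Rmax) (μ : Measure (S × A)) [IsProbabilityMeasure μ] :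
    ∫⁻ sa, ENNReal.ofReal (R sa) ∂μ ≤ ENNReal.ofReal Rmax := by
  calc ∫⁻ sa, ENNReal.ofReal (R sa) ∂μ
      ≤ ∫⁻ _, ENNReal.ofReal Rmax ∂μ :=
        lintegral_mono fun sa => ENNReal.ofReal_le_ofReal (hRmax sa)
    _ = ENNReal.ofReal Rmax := by rw [lintegral_const, measure_univ, mul_one]

lemma lint_ne_top (hRmax : ∀ sa, R sa ≤ Rmax) (μ : Measure (S × A))
    [IsProbabilityMeasure μ] :
    ∫⁻ sa, ENNReal.ofReal (R sa) ∂μ ≠ ⊤ :=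
  ((lint_le R hRmax μ).trans_lt ENNReal.ofReal_lt_top).ne

lemma Mne (hγ1 : γ < 1) : ENNReal.ofReal Rmax * (1 - ENNReal.ofReal γ)⁻¹ ≠ ⊤ := by
  refine ENNReal.mul_ne_top ENNReal.ofReal_ne_top (ENNReal.inv_ne_top.2 ?_)
  intro h
  exact absurd (tsub_eq_zero_iff_le.mp h) (not_le.mpr (ENNReal.ofReal_lt_one.2 hγ1))

lemma enW_le_M (hRmax : ∀ sa, R sa ≤ Rmax) (σ : ℕ → Kernel S A)
    (hσ : ∀ k, IsMarkovKernel (σ k))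
    (ρ : Measure (S × A)) [IsProbabilityMeasure ρ] :
    enW P γ R σ ρ ≤ ENNReal.ofReal Rmax * (1 - ENNReal.ofReal γ)⁻¹ := by
  calc enW P γ R σ ρ
      ≤ ∑' i, ENNReal.ofReal γ ^ i * ENNReal.ofReal Rmax := by
        refine ENNReal.tsum_le_tsum fun i => mul_le_mul_right ?_ _
        haveI := saLawFrom_prob P σ hσ ρ i
        exact lint_le R hRmax _
    _ = (∑' i, ENNReal.ofReal γ ^ i) * ENNReal.ofReal Rmax := ENNReal.tsum_mul_right
    _ = ENNReal.ofReal Rmax * (1 - ENNReal.ofReal γ)⁻¹ := by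
        rw [ENNReal.tsum_geometric, mul_comm]

lemma enW_ne_top (hRmax : ∀ sa, R sa ≤ Rmax) (hγ1 : γ < 1) (σ : ℕ → Kernel S A)
    (hσ : ∀ k, IsMarkovKernel (σ k))
    (ρ : Measure (S × A)) [IsProbabilityMeasure ρ] : enW P γ R σ ρ ≠ ⊤ :=
  ((enW_le_M P γ R hRmax σ hσ ρ).trans_lt
    (lt_top_iff_ne_top.2 (Mne γ (Rmax := Rmax) hγ1))).ne

lemma W_toReal (hRmax : ∀ sa, R sa ≤ Rmax) (hγ0 : 0 ≤ γ) (hRmeas : Measurable R)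
    (hR0 : ∀ sa, 0 ≤ R sa) (σ : ℕ → Kernel S A) (hσ : ∀ k, IsMarkovKernel (σ k))
    (ρ : Measure (S × A)) [IsProbabilityMeasure ρ] :
    (∑' i, γ ^ i * ∫ sa, R sa ∂(saLawFrom P σ ρ i)) = (enW P γ R σ ρ).toReal := by
  have hne : ∀ i, ENNReal.ofReal γ ^ i *
      ∫⁻ sa, ENNReal.ofReal (R sa) ∂(saLawFrom P σ ρ i) ≠ ⊤ := by
    intro i
    haveI := saLawFrom_prob P σ hσ ρ i
    exact ENNReal.mul_ne_top (ENNReal.pow_ne_top ENNReal.ofReal_ne_top)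
      (lint_ne_top R hRmax _)
  rw [enW, ENNReal.tsum_toReal_eq hne]
  refine tsum_congr fun i => ?_
  rw [ENNReal.toReal_mul, ENNReal.toReal_pow, ENNReal.toReal_ofReal hγ0,
    integral_eq_lintegral_of_nonneg_ae (Filter.Eventually.of_forall hR0)
      hRmeas.aestronglyMeasurable]

lemma retJ_eq (hRmax : ∀ sa, R sa ≤ Rmax) (hγ0 : 0 ≤ γ) (hRmeas : Measurable R)
    (hR0 : ∀ sa, 0 ≤ R sa) (τ : ℕ → Kernel S A) (hτ : ∀ k, IsMarkovKernel (τ k))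
    (μ : Measure S) [IsProbabilityMeasure μ] :
    retJ P τ μ γ R = (enW P γ R τ (mdpInit (τ 0) μ)).toReal := by
  haveI := hτ 0
  haveI : IsMarkovKernel (initK (τ 0)) := initK_markov (τ 0)
  haveI : IsProbabilityMeasure (mdpInit (τ 0) μ) := by
    rw [mdpInit_eq]; exact isProb_bind μ (initK (τ 0))
  rw [retJ, ← W_toReal P γ R hRmax hγ0 hRmeas hR0 τ hτ (mdpInit (τ 0) μ)]
  exact tsum_congr fun i => by rw [saLaw_eq_from P τ μ i]

lemma initK_prob (κ : Kernel S A) [IsMarkovKernel κ] (s : S) :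
    IsProbabilityMeasure (initK κ s) := by
  haveI := initK_markov κ
  infer_instance

lemma mdpInit_prob (κ : Kernel S A) [IsMarkovKernel κ] (μ : Measure S)
    [IsProbabilityMeasure μ] : IsProbabilityMeasure (mdpInit κ μ) := by
  haveI := initK_markov κ
  rw [mdpInit_eq]; exact isProb_bind μ (initK κ)

lemma Vval_eq (hRmax : ∀ sa, R sa ≤ Rmax) (hγ0 : 0 ≤ γ) (hRmeas : Measurable R)
    (hR0 : ∀ sa, 0 ≤ R sa) (τ : ℕ → Kernel S A) (hτ : ∀ k, IsMarkovKernel (τ k)) (s : S) :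
    Vval P τ γ R s = (env P γ R τ s).toReal := by
  haveI := hτ 0
  rw [Vval, retJ_eq P γ R hRmax hγ0 hRmeas hR0 τ hτ, env, mdpInit_eq,
    Measure.dirac_bind (Kernel.measurable _)]

lemma env_ne_top (hRmax : ∀ sa, R sa ≤ Rmax) (hγ1 : γ < 1) (τ : ℕ → Kernel S A)
    (hτ : ∀ k, IsMarkovKernel (τ k)) (s : S) : env P γ R τ s ≠ ⊤ := by
  haveI := hτ 0
  haveI := initK_prob (τ 0) s
  exact enW_ne_top P γ R hRmax hγ1 τ hτ _

lemma enW_congr (σ σ' : ℕ → Kernel S A) (h : ∀ k, 1 ≤ k → σ k = σ' k)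
    (ρ : Measure (S × A)) : enW P γ R σ ρ = enW P γ R σ' ρ :=
  tsum_congr fun i => by rw [saLawFrom_congr P σ σ' h ρ i]

set_option maxHeartbeats 1000000 in
lemma enW_step (σ : ℕ → Kernel S A) (hσ : ∀ k, IsMarkovKernel (σ k))
    (ρ : Measure (S × A)) :
    enW P γ R σ ρ = (∫⁻ sa, ENNReal.ofReal (R sa) ∂ρ) +
      ENNReal.ofReal γ * enW P γ R (shift σ) (mdpStep P (σ 1) ρ) := by
  rw [enW, tsum_eq_zero_add' ENNReal.summable]
  simp only [pow_zero, one_mul]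
  congr 1
  rw [enW, ← ENNReal.tsum_mul_left]
  refine tsum_congr fun i => ?_
  rw [saLawFrom_shift P σ ρ i, pow_succ]
  ring

lemma enW_bind (σ : ℕ → Kernel S A) (hσ : ∀ k, IsMarkovKernel (σ k)) (hRmeas : Measurable R)
    {α : Type*} [MeasurableSpace α] (μ : Measure α) (f : α → Measure (S × A))
    (hf : Measurable f) :
    enW P γ R σ (μ.bind f) = ∫⁻ a, enW P γ R σ (f a) ∂μ := by
  have hmeasR : Measurable fun sa : S × A => ENNReal.ofReal (R sa) :=
    ENNReal.measurable_ofReal.comp hRmeas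
  have h1 : ∀ i, saLawFrom P σ (μ.bind f) i
      = μ.bind fun a => (f a).bind ⇑(LK P σ i) := fun i => by
    rw [saLawFrom_eq_bind P σ hσ _ i, Measure.bind_bind hf.aemeasurable (Kernel.measurable _).aemeasurable]
  have h2 : ∀ i, Measurable fun a => (f a).bind ⇑(LK P σ i) := fun i =>
    (Measure.measurable_bind' (Kernel.measurable _)).comp hf
  calc enW P γ R σ (μ.bind f)
      = ∑' i, ENNReal.ofReal γ ^ i *
          ∫⁻ a, (∫⁻ sa, ENNReal.ofReal (R sa) ∂((f a).bind ⇑(LK P σ i))) ∂μ := by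
        refine tsum_congr fun i => ?_
        rw [h1 i, Measure.lintegral_bind (h2 i).aemeasurable hmeasR.aemeasurable]
    _ = ∫⁻ a, ∑' i, ENNReal.ofReal γ ^ i *
          ∫⁻ sa, ENNReal.ofReal (R sa) ∂((f a).bind ⇑(LK P σ i)) ∂μ := by
        have h3 : ∀ i : ℕ, Measurable fun a => ENNReal.ofReal γ ^ i *
            ∫⁻ sa, ENNReal.ofReal (R sa) ∂((f a).bind ⇑(LK P σ i)) := fun i =>
          ((Measure.measurable_lintegral hmeasR).comp (h2 i)).const_mul _
        rw [lintegral_tsum fun i => (h3 i).aemeasurable]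
        exact tsum_congr fun i => (lintegral_const_mul' _ _
          (ENNReal.pow_ne_top ENNReal.ofReal_ne_top)).symm
    _ = ∫⁻ a, enW P γ R σ (f a) ∂μ := by
        refine lintegral_congr fun a => ?_
        rw [enW]
        exact (tsum_congr fun i => by rw [saLawFrom_eq_bind P σ hσ _ i]).symm

end Values
section Switch

variable (P : Kernel (S × A) S) [IsMarkovKernel P] (γ : ℝ) (R : S × A → ℝ)

/-- Policy that follows `σ` for the first `n` steps, then switches to `πe`. -/
def switchAt (πe : Kernel S A) (σ : ℕ → Kernel S A) (n : ℕ) : ℕ → Kernel S A :=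
  fun k => if k < n then σ k else πe

lemma switchAt_markov (πe : Kernel S A) [IsMarkovKernel πe] (σ : ℕ → Kernel S A)
    (hσ : ∀ k, IsMarkovKernel (σ k)) (n : ℕ) :
    ∀ k, IsMarkovKernel (switchAt πe σ n k) := fun k => by
  unfold switchAt
  split
  · exact hσ k
  · infer_instance

lemma enW_le_const (πe : Kernel S A) [IsMarkovKernel πe] (hRmeas : Measurable R)
    (hVle : ∀ τ : ℕ → Kernel S A, (∀ k, IsMarkovKernel (τ k)) → ∀ s,
      env P γ R τ s ≤ env P γ R (fun _ => πe) s)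
    (σ : ℕ → Kernel S A) (hσ : ∀ k, IsMarkovKernel (σ k)) (ρ : Measure (S × A)) :
    enW P γ R σ ρ ≤ enW P γ R (fun _ => πe) ρ := by
  haveI := hσ 1
  rw [enW_step P γ R σ hσ ρ, enW_step P γ R (fun _ => πe) (fun _ => inferInstance) ρ]
  refine add_le_add_right (mul_le_mul_right ?_ _) _
  rw [mdpStep_eq' P (σ 1) ρ, mdpStep_eq' P πe ρ,
    enW_bind P γ R (shift σ) (fun k => hσ (k + 1)) hRmeas _ _ (Kernel.measurable _),
    enW_bind P γ R (shift fun _ => πe) (fun _ => (inferInstance : IsMarkovKernel πe))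
      hRmeas _ _ (Kernel.measurable _)]
  refine lintegral_mono fun s => ?_
  have hτ : ∀ k, IsMarkovKernel
      ((fun k => if k = 0 then σ 1 else σ (k + 1) : ℕ → Kernel S A) k) := fun k => by
    dsimp only
    split
    · exact hσ 1
    · exact hσ (k + 1)
  have h1 : enW P γ R (shift σ) (initK (σ 1) s)
      = env P γ R (fun k => if k = 0 then σ 1 else σ (k + 1)) s := by
    rw [env]
    simp only [reduceIte]
    exact enW_congr P γ R (shift σ) _ (fun k hk => by
      show σ (k + 1) = if k = 0 then σ 1 else σ (k + 1)
      rw [if_neg (by omega)]) _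
  rw [h1]
  exact hVle _ hτ s

lemma enW_switch (πe : Kernel S A) [IsMarkovKernel πe] (hRmeas : Measurable R)
    (hVle : ∀ τ : ℕ → Kernel S A, (∀ k, IsMarkovKernel (τ k)) → ∀ s,
      env P γ R τ s ≤ env P γ R (fun _ => πe) s) :
    ∀ n : ℕ, ∀ σ : ℕ → Kernel S A, (∀ k, IsMarkovKernel (σ k)) → ∀ ρ : Measure (S × A),
      enW P γ R σ ρ ≤ enW P γ R (switchAt πe σ n) ρ := by
  intro n
  induction n with
  | zero =>
    intro σ hσ ρ
    have h : switchAt πe σ 0 = fun _ => πe := funext fun k => if_neg (Nat.not_lt_zero k)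
    rw [h]
    exact enW_le_const P γ R πe hRmeas hVle σ hσ ρ
  | succ n IH =>
    intro σ hσ ρ
    rcases Nat.eq_zero_or_pos n with hn | hn
    · subst hn
      have h : enW P γ R (switchAt πe σ 1) ρ = enW P γ R (fun _ => πe) ρ :=
        enW_congr P γ R _ _ (fun k hk => if_neg (by omega)) ρ
      rw [h]
      exact enW_le_const P γ R πe hRmeas hVle σ hσ ρ
    · obtain ⟨m, rfl⟩ : ∃ m, n = m + 1 := ⟨n - 1, by omega⟩
      haveI := hσ 1
      have hsw := switchAt_markov πe σ hσ (m + 2)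
      rw [enW_step P γ R σ hσ ρ, enW_step P γ R (switchAt πe σ (m + 2)) hsw ρ]
      have h1 : switchAt πe σ (m + 2) 1 = σ 1 := if_pos (by omega)
      have h2 : shift (switchAt πe σ (m + 2)) = switchAt πe (shift σ) (m + 1) :=
        funext fun k => by
          show (if k + 1 < m + 2 then σ (k + 1) else πe)
            = (if k < m + 1 then σ (k + 1) else πe)
          exact if_congr (by omega) rfl rfl
      rw [h1, h2]
      exact add_le_add_right (mul_le_mul_right (IH (shift σ) (fun k => hσ (k + 1)) _) _) _

variable {Rmax : ℝ}

lemma retJ_switch (hRmax : ∀ sa, R sa ≤ Rmax) (hγ0 : 0 ≤ γ) (hγ1 : γ < 1)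
    (hRmeas : Measurable R) (hR0 : ∀ sa, 0 ≤ R sa)
    (πe : Kernel S A) [IsMarkovKernel πe]
    (hVle : ∀ τ : ℕ → Kernel S A, (∀ k, IsMarkovKernel (τ k)) → ∀ s,
      env P γ R τ s ≤ env P γ R (fun _ => πe) s)
    (π : ℕ → Kernel S A) (hπ : ∀ k, IsMarkovKernel (π k)) (n : ℕ) (hn : 1 ≤ n)
    (μ : Measure S) [IsProbabilityMeasure μ] :
    retJ P π μ γ R ≤ retJ P (switchAt πe π n) μ γ R := by
  have hsw := switchAt_markov πe π hπ n
  rw [retJ_eq P γ R hRmax hγ0 hRmeas hR0 π hπ μ,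
    retJ_eq P γ R hRmax hγ0 hRmeas hR0 _ hsw μ]
  have h0 : switchAt πe π n 0 = π 0 := if_pos (by omega)
  rw [h0]
  haveI := hπ 0
  haveI := mdpInit_prob (π 0) μ
  exact ENNReal.toReal_mono (enW_ne_top P γ R hRmax hγ1 _ hsw _)
    (enW_switch P γ R πe hRmeas hVle n π hπ _)

lemma iterate_mdpStep (κ : Kernel S A) (ρ : Measure (S × A)) :
    ∀ i, (mdpStep P κ)^[i] ρ = saLawFrom P (fun _ => κ) ρ i
  | 0 => rfl
  | (i + 1) => by
    rw [Function.iterate_succ_apply', iterate_mdpStep κ ρ i]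
    rfl

lemma saLaw_switch (πe : Kernel S A) (π : ℕ → Kernel S A) (μ : Measure S) (j : ℕ) :
    ∀ i, saLawFrom P (fun _ => πe) (saLaw P π μ j) i
      = saLaw P (switchAt πe π (j + 1)) μ (j + i)
  | 0 => saLaw_congr P π (switchAt πe π (j + 1)) μ j
      (fun k hk => (if_pos (by omega)).symm)
  | (i + 1) => by
    show mdpStep P πe (saLawFrom P (fun _ => πe) (saLaw P π μ j) i) = _
    rw [saLaw_switch πe π μ j i]
    have h : saLaw P (switchAt πe π (j + 1)) μ (j + (i + 1))
        = mdpStep P (switchAt πe π (j + 1) (j + i + 1))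
          (saLaw P (switchAt πe π (j + 1)) μ (j + i)) := rfl
    rw [h, show switchAt πe π (j + 1) (j + i + 1) = πe from if_neg (by omega)]

lemma saLawFrom_bind_meas (σ : ℕ → Kernel S A) (hσ : ∀ k, IsMarkovKernel (σ k))
    {α : Type*} [MeasurableSpace α] (μ : Measure α) (f : α → Measure (S × A))
    (hf : Measurable f) (i : ℕ) :
    saLawFrom P σ (μ.bind f) i = μ.bind fun a => saLawFrom P σ (f a) i := by
  rw [saLawFrom_eq_bind P σ hσ _ i, Measure.bind_bind hf.aemeasurable (Kernel.measurable _).aemeasurable]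
  exact congrArg (Measure.bind μ) (funext fun a => (saLawFrom_eq_bind P σ hσ (f a) i).symm)

end Switch
end MDPaux
/-- a mixture `d_c` of occupancies of near-optimal policies, whose per-step
laws are all covered by `d^D`, satisfies `d_{d_c, π*_e} ≤ C · d^D`. -/
theorem mixture_occupancy_covered
    (P : Kernel (S × A) S) [IsMarkovKernel P]
    (πe : Kernel S A) [IsMarkovKernel πe]
    (μ0 : Measure S) [IsProbabilityMeasure μ0]
    (γ : ℝ) (hγ : γ ∈ Set.Ioo (0 : ℝ) 1)
    (Rmax : ℝ) (R : S × A → ℝ) (hRmeas : Measurable R)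
    (hRrange : ∀ sa, R sa ∈ Set.Icc 0 Rmax)
    -- `π*_e` is optimal almost everywhere (over all non-stationary policies)
    (hopt : ∀ s : S, Vval P (fun _ => πe) γ R s =
      ⨆ π : {π : ℕ → Kernel S A // ∀ i, IsMarkovKernel (π i)}, Vval P π.1 γ R s)
    -- Bellman optimality equation for `Q* = Q_{π*_e}`
    (hBellman : ∀ sa : S × A, Qval P (fun _ => πe) γ R sa =
      R sa + γ * ∫ s', (⨆ a', Qval P (fun _ => πe) γ R (s', a')) ∂(P sa))
    (hVsup : ∀ s : S, Vval P (fun _ => πe) γ R s = ⨆ a, Qval P (fun _ => πe) γ R (s, a))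
    (hVpi : ∀ s : S, Vval P (fun _ => πe) γ R s = ∫ a, Qval P (fun _ => πe) γ R (s, a) ∂(πe s))
    -- constants and the data distribution
    (ε C : ℝ) (hε : 0 ≤ ε) (hC : 0 < C)
    (dD : Measure (S × A)) [IsProbabilityMeasure dD]
    -- every per-step law of every non-stationary `ε`-near-optimal policy is covered by `d^D`
    (hcover : ∀ π : ℕ → Kernel S A, (∀ i, IsMarkovKernel (π i)) →
      retJ P (fun _ => πe) μ0 γ R - retJ P π μ0 γ R ≤ ε →
      ∀ (i : ℕ) (B : Set (S × A)), MeasurableSet B →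
        saLaw P π μ0 i B ≤ ENNReal.ofReal C * dD B)
    -- the mixing probability space and the mixed family of near-optimal policies
    (Θ : Type*) [MeasurableSpace Θ] (lam : Measure Θ) [IsProbabilityMeasure lam]
    (πθ : Θ → ℕ → Kernel S A) (hMk : ∀ θ i, IsMarkovKernel (πθ θ i))
    (hnear : ∀ θ, retJ P (fun _ => πe) μ0 γ R - retJ P (πθ θ) μ0 γ R ≤ ε)
    (hmeas : ∀ B : Set (S × A), MeasurableSet B →
      Measurable fun θ => saOcc P (πθ θ) μ0 γ B)
    -- the mixture distribution `d_c(B) = ∫ d_{π^θ}(B) dλ(θ)`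
    (dc : Measure (S × A))
    (hdc : ∀ B : Set (S × A), MeasurableSet B →
      dc B = ∫⁻ θ, saOcc P (πθ θ) μ0 γ B ∂lam) :
    ∀ B : Set (S × A), MeasurableSet B →
      saOccFrom P πe γ dc B ≤ ENNReal.ofReal C * dD B := by
  intro B hB
  classical
  obtain ⟨hγ0', hγ1⟩ := hγ
  have hγ0 : 0 ≤ γ := hγ0'.le
  have hR0 : ∀ sa, 0 ≤ R sa := fun sa => (hRrange sa).1
  have hRmax : ∀ sa, R sa ≤ Rmax := fun sa => (hRrange sa).2
  have hγlt : ENNReal.ofReal γ < 1 := ENNReal.ofReal_lt_one.2 hγ1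
  have hconstM : ∀ k : ℕ, IsMarkovKernel ((fun _ : ℕ => πe) k) :=
    fun _ => (inferInstance : IsMarkovKernel πe)
  -- pointwise value domination coming from the optimality of `πe`
  have hVle : ∀ τ : ℕ → Kernel S A, (∀ k, IsMarkovKernel (τ k)) → ∀ s,
      MDPaux.env P γ R τ s ≤ MDPaux.env P γ R (fun _ => πe) s := by
    intro τ hτ s
    have hbdd : BddAbove (Set.range fun π : {π : ℕ → Kernel S A // ∀ i, IsMarkovKernel (π i)} =>
        Vval P π.1 γ R s) := by
      refine ⟨(ENNReal.ofReal Rmax * (1 - ENNReal.ofReal γ)⁻¹).toReal, ?_⟩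
      rintro x ⟨π, rfl⟩
      show Vval P π.1 γ R s ≤ _
      rw [MDPaux.Vval_eq P γ R hRmax hγ0 hRmeas hR0 π.1 π.2 s]
      refine ENNReal.toReal_mono (MDPaux.Mne γ hγ1) ?_
      haveI := π.2 0
      haveI := MDPaux.initK_prob (π.1 0) s
      exact MDPaux.enW_le_M P γ R hRmax π.1 π.2 _
    have hre : Vval P τ γ R s ≤ Vval P (fun _ => πe) γ R s := by
      rw [hopt s]
      exact le_ciSup hbdd ⟨τ, hτ⟩
    rw [MDPaux.Vval_eq P γ R hRmax hγ0 hRmeas hR0 τ hτ s,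
      MDPaux.Vval_eq P γ R hRmax hγ0 hRmeas hR0 (fun _ => πe) hconstM s] at hre
    exact (ENNReal.toReal_le_toReal (MDPaux.env_ne_top P γ R hRmax hγ1 τ hτ s)
      (MDPaux.env_ne_top P γ R hRmax hγ1 (fun _ => πe) hconstM s)).mp hre
  have key1 : ENNReal.ofReal (1 - γ) * ∑' i : ℕ, ENNReal.ofReal γ ^ i = 1 := by
    rw [ENNReal.tsum_geometric, ENNReal.ofReal_sub 1 hγ0, ENNReal.ofReal_one]
    exact ENNReal.mul_inv_cancel (tsub_pos_of_lt hγlt).ne'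
      (ENNReal.sub_ne_top ENNReal.one_ne_top)
  -- near-optimality of the switched policies
  have hnear' : ∀ θ (j : ℕ), retJ P (fun _ => πe) μ0 γ R
      - retJ P (MDPaux.switchAt πe (πθ θ) (j + 1)) μ0 γ R ≤ ε := by
    intro θ j
    have h := MDPaux.retJ_switch P γ R hRmax hγ0 hγ1 hRmeas hR0 πe hVle (πθ θ) (hMk θ)
      (j + 1) (by omega) μ0
    linarith [hnear θ]
  have hswM : ∀ θ (j : ℕ), ∀ k, IsMarkovKernel (MDPaux.switchAt πe (πθ θ) (j + 1) k) :=
    fun θ j => MDPaux.switchAt_markov πe (πθ θ) (hMk θ) (j + 1)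
  have hcov' : ∀ θ (j i : ℕ), saLawFrom P (fun _ => πe) (saLaw P (πθ θ) μ0 j) i B
      ≤ ENNReal.ofReal C * dD B := by
    intro θ j i
    rw [MDPaux.saLaw_switch P πe (πθ θ) μ0 j i]
    exact hcover _ (hswM θ j) (hnear' θ j) (j + i) B hB
  -- per-`θ` bound on the occupancy pushed `i` steps by `πe`
  have hθbound : ∀ θ (i : ℕ),
      saLawFrom P (fun _ => πe) (saOcc P (πθ θ) μ0 γ) i B ≤ ENNReal.ofReal C * dD B := by
    intro θ i
    rw [MDPaux.saLawFrom_eq_bind P (fun _ => πe) hconstM _ i,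
      Measure.bind_apply hB (Kernel.measurable _).aemeasurable, saOcc, lintegral_smul_measure,
      lintegral_sum_measure]
    simp_rw [lintegral_smul_measure]
    have heach : ∀ j : ℕ, ∫⁻ sa, (MDPaux.LK P (fun _ => πe) i) sa B ∂(saLaw P (πθ θ) μ0 j)
        ≤ ENNReal.ofReal C * dD B := by
      intro j
      rw [← Measure.bind_apply hB (Kernel.measurable _).aemeasurable,
        ← MDPaux.saLawFrom_eq_bind P (fun _ => πe) hconstM _ i]
      exact hcov' θ j i
    refine le_trans (mul_le_mul_right
      (ENNReal.tsum_le_tsum fun j => mul_le_mul_right (heach j) _) _) (le_of_eq ?_)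
    simp_rw [ENNReal.ofReal_pow hγ0]
    rw [ENNReal.tsum_mul_right, ← mul_assoc, key1, one_mul]
  -- the mixture
  have hf : Measurable fun θ => saOcc P (πθ θ) μ0 γ :=
    Measure.measurable_of_measurable_coe _ hmeas
  have hdc' : dc = lam.bind fun θ => saOcc P (πθ θ) μ0 γ := by
    ext E hE
    rw [hdc E hE, Measure.bind_apply hE hf.aemeasurable]
  have hterm : ∀ i : ℕ, ((mdpStep P πe)^[i] dc) B ≤ ENNReal.ofReal C * dD B := by
    intro i
    have hm : Measurable fun θ => saLawFrom P (fun _ => πe) (saOcc P (πθ θ) μ0 γ) i := by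
      have h : (fun θ => saLawFrom P (fun _ => πe) (saOcc P (πθ θ) μ0 γ) i)
          = fun θ => (saOcc P (πθ θ) μ0 γ).bind ⇑(MDPaux.LK P (fun _ => πe) i) :=
        funext fun θ => MDPaux.saLawFrom_eq_bind P _ hconstM _ i
      rw [h]
      exact (Measure.measurable_bind' (Kernel.measurable _)).comp hf
    rw [MDPaux.iterate_mdpStep P πe dc i, hdc',
      MDPaux.saLawFrom_bind_meas P (fun _ => πe) hconstM lam _ hf i,
      Measure.bind_apply hB hm.aemeasurable]
    calc ∫⁻ θ, saLawFrom P (fun _ => πe) (saOcc P (πθ θ) μ0 γ) i B ∂lam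
        ≤ ∫⁻ _, ENNReal.ofReal C * dD B ∂lam := lintegral_mono fun θ => hθbound θ i
      _ = ENNReal.ofReal C * dD B := by rw [lintegral_const, measure_univ, mul_one]
  rw [saOccFrom, Measure.smul_apply, Measure.sum_apply _ hB]
  simp_rw [Measure.smul_apply, smul_eq_mul]
  refine le_trans (mul_le_mul_right
    (ENNReal.tsum_le_tsum fun i => mul_le_mul_right (hterm i) _) _) (le_of_eq ?_)
  simp_rw [ENNReal.ofReal_pow hγ0]
  rw [ENNReal.tsum_mul_right, ← mul_assoc, key1, one_mul]
end
end

section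
/- Strong convexity lower bound for the population loss at Q*: let d be any probability measure on S × A, let w : S × A → [0, ∞) be bounded measurable, and let q : S × A → [0, V_max] be measurable with s' ↦ sup_a q(s', a) measurable; assume Q*(s, a) ∈ [0, V_max] for all (s, a). Let d^D_w denote the finite measure with density w with respect to d^D, and let P_{π*_e} d^D_w be its image under one state-action transition step (s' ~ P(·|s, a), a' ~ π*_e(·|s')). Then L(d, q, w) − L(d, Q*, w) ≥ 0.5·⟨d, q² − (Q*)²⟩ + γ·⟨P_{π*_e} d^D_w, q − Q*⟩ − ⟨d^D_w, q − Q*⟩. -/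
open MeasureTheory ProbabilityTheory Filter Set

noncomputable section

variable {S A : Type*} [MeasurableSpace S] [MeasurableSpace A]

/-- `sup_{a'} q(s', a')`. -/
def qmax (q : S × A → ℝ) (s' : S) : ℝ := ⨆ a, q (s', a)

/-- Law of one dataset tuple `((s, a), s')` with `(s, a) ~ d^D` and `s' ~ P(·|s,a)`
(the reward `r = R(s,a)` is a deterministic function of `(s,a)`). -/
def sampleLaw (P : Kernel (S × A) S) (dD : Measure (S × A)) : Measure ((S × A) × S) :=
  dD.compProd P

/-- Law of a dataset of `N` i.i.d. tuples. -/
def dataLaw (N : ℕ) (P : Kernel (S × A) S) [IsMarkovKernel P]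
    (dD : Measure (S × A)) [IsProbabilityMeasure dD] :
    Measure (Fin N → (S × A) × S) :=
  Measure.pi fun _ => sampleLaw P dD

/-- The TD-type term inside the losses. -/
def lossTerm (γ : ℝ) (R : S × A → ℝ) (q w : S × A → ℝ) (x : (S × A) × S) : ℝ :=
  w x.1 * (γ * qmax q x.2 + R x.1 - q x.1)

/-- Empirical loss `L̂(d, q, w)` evaluated on the dataset `ω`. -/
def empLoss (N : ℕ) (γ : ℝ) (R : S × A → ℝ) (d : Measure (S × A)) (q w : S × A → ℝ)
    (ω : Fin N → (S × A) × S) : ℝ :=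
  0.5 * ∫ sa, (q sa) ^ 2 ∂d + (1 / N) * ∑ i : Fin N, lossTerm γ R q w (ω i)

/-- Population loss `L(d, q, w)`. -/
def popLoss (P : Kernel (S × A) S) (dD : Measure (S × A)) (γ : ℝ) (R : S × A → ℝ)
    (d : Measure (S × A)) (q w : S × A → ℝ) : ℝ :=
  0.5 * ∫ sa, (q sa) ^ 2 ∂d + ∫ x, lossTerm γ R q w x ∂(sampleLaw P dD)

/-- The statistical error rate `ε_stat`. -/
def epsStat (UW Vmax : ℝ) (nQ nW N : ℕ) (δ : ℝ) : ℝ :=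
  UW * Vmax * Real.sqrt (2 * Real.log (2 * nQ * nW / δ) / N)


section AuxSC

open ProbabilityTheory

variable {X Y : Type*} [MeasurableSpace X] [MeasurableSpace Y]

lemma integrable_of_bdd {μ : Measure X} [IsFiniteMeasure μ] {f : X → ℝ}
    (hf : AEStronglyMeasurable f μ) {C : ℝ} (hC : ∀ x, |f x| ≤ C) : Integrable f μ :=
  Integrable.mono' (integrable_const C) hf
    (Filter.Eventually.of_forall fun x => by simpa [Real.norm_eq_abs] using hC x)

lemma abs_integral_le_of_bdd {μ : Measure X} [IsProbabilityMeasure μ] {f : X → ℝ} {C : ℝ}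
    (h : ∀ x, |f x| ≤ C) : |∫ x, f x ∂μ| ≤ C := by
  have := norm_integral_le_of_norm_le_const (μ := μ) (f := f) (C := C)
    (Filter.Eventually.of_forall fun x => by simpa [Real.norm_eq_abs] using h x)
  simpa [Real.norm_eq_abs] using this

lemma bind_kernel_eq_map_snd (ρ : Measure X) [SFinite ρ] (κ : Kernel X Y) [IsMarkovKernel κ] :
    ρ.bind ⇑κ = (ρ.compProd κ).map Prod.snd := by
  ext s hs
  rw [Measure.bind_apply hs κ.measurable.aemeasurable, Measure.map_apply measurable_snd hs,
    Measure.compProd_apply (measurable_snd hs)]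
  rfl

lemma integral_bind_kernel_s12 (ρ : Measure X) [IsFiniteMeasure ρ] (κ : Kernel X Y)
    [IsMarkovKernel κ] {f : Y → ℝ} (hf : Measurable f) {C : ℝ} (hC : ∀ y, |f y| ≤ C) :
    ∫ y, f y ∂(ρ.bind ⇑κ) = ∫ x, ∫ y, f y ∂(κ x) ∂ρ := by
  rw [bind_kernel_eq_map_snd, integral_map measurable_snd.aemeasurable hf.aestronglyMeasurable]
  exact Measure.integral_compProd (integrable_of_bdd
    ((hf.comp measurable_snd).aestronglyMeasurable) (fun p => hC p.2))

lemma isProbabilityMeasure_bind_kernel (ρ : Measure X) [IsProbabilityMeasure ρ]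
    (κ : Kernel X Y) [IsMarkovKernel κ] : IsProbabilityMeasure (ρ.bind ⇑κ) := by
  constructor
  rw [Measure.bind_apply MeasurableSet.univ κ.measurable.aemeasurable]
  simp

end AuxSC

section AuxSC2

open ProbabilityTheory

lemma idProd_apply (κ : Kernel S A) [IsMarkovKernel κ] (s : S) :
    (Kernel.id ×ₖ κ) s = (κ s).map (Prod.mk s) := by
  rw [Kernel.prod_apply, Kernel.id_apply, Measure.dirac_prod]

lemma mdpStep_eq_bind (P : Kernel (S × A) S) [IsMarkovKernel P] (κ : Kernel S A)
    [IsMarkovKernel κ] (ρ : Measure (S × A)) :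
    mdpStep P κ ρ = ρ.bind ⇑((Kernel.id ×ₖ κ) ∘ₖ P) := by
  unfold mdpStep
  congr 1
  funext sa
  rw [Kernel.comp_apply]
  congr 1
  funext s'
  rw [idProd_apply]

lemma measurable_saLawFrom_dirac (P : Kernel (S × A) S) [IsMarkovKernel P]
    (π : ℕ → Kernel S A) [∀ i, IsMarkovKernel (π i)] :
    ∀ i, Measurable fun sa : S × A => saLawFrom P π (Measure.dirac sa) i
  | 0 => Measure.measurable_dirac
  | (n + 1) => by
    have heq : (fun sa : S × A => saLawFrom P π (Measure.dirac sa) (n + 1))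
        = fun sa => (saLawFrom P π (Measure.dirac sa) n).bind
            ⇑((Kernel.id ×ₖ π (n + 1)) ∘ₖ P) := by
      funext sa
      rw [show saLawFrom P π (Measure.dirac sa) (n + 1)
          = mdpStep P (π (n + 1)) (saLawFrom P π (Measure.dirac sa) n) from rfl,
        mdpStep_eq_bind]
    rw [heq]
    exact (Measure.measurable_bind' ((Kernel.id ×ₖ π (n + 1)) ∘ₖ P).measurable).comp
      (measurable_saLawFrom_dirac P π n)

lemma isProbabilityMeasure_saLawFrom (P : Kernel (S × A) S) [IsMarkovKernel P]
    (π : ℕ → Kernel S A) [∀ i, IsMarkovKernel (π i)] (ρ : Measure (S × A))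
    [IsProbabilityMeasure ρ] : ∀ i, IsProbabilityMeasure (saLawFrom P π ρ i)
  | 0 => by rw [show saLawFrom P π ρ 0 = ρ from rfl]; infer_instance
  | (n + 1) => by
    haveI := isProbabilityMeasure_saLawFrom P π ρ n
    rw [show saLawFrom P π ρ (n + 1) = mdpStep P (π (n + 1)) (saLawFrom P π ρ n) from rfl,
      mdpStep_eq_bind]
    exact isProbabilityMeasure_bind_kernel _ _

lemma measurable_Qval (P : Kernel (S × A) S) [IsMarkovKernel P] (π : ℕ → Kernel S A)
    [∀ i, IsMarkovKernel (π i)] {γ : ℝ} (hγ0 : 0 ≤ γ) (hγ1 : γ < 1)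
    {R : S × A → ℝ} (hR : Measurable R) {Rmax : ℝ} (hRr : ∀ sa, R sa ∈ Set.Icc 0 Rmax) :
    Measurable (Qval P π γ R) := by
  set T : ℕ → (S × A) → ℝ :=
    fun i sa => γ ^ i * ∫ x, R x ∂(saLawFrom P π (Measure.dirac sa) i) with hT
  have hTm : ∀ i, Measurable (T i) := by
    intro i
    have h1 : (fun sa : S × A => ∫ x, R x ∂(saLawFrom P π (Measure.dirac sa) i))
        = fun sa => (∫⁻ x, ENNReal.ofReal (R x) ∂(saLawFrom P π (Measure.dirac sa) i)).toReal := by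
      funext sa
      exact integral_eq_lintegral_of_nonneg_ae
        (Filter.Eventually.of_forall fun x => (hRr x).1) hR.aestronglyMeasurable
    exact measurable_const.mul (by
      rw [h1]
      exact ENNReal.measurable_toReal.comp
        ((Measure.measurable_lintegral hR.ennreal_ofReal).comp
          (measurable_saLawFrom_dirac P π i)))
  have hpart : ∀ n, Measurable fun sa => ∑ i ∈ Finset.range n, T i sa :=
    fun n => Finset.measurable_sum _ fun i _ => hTm i
  have hQeq : Qval P π γ R = fun sa => ∑' i, T i sa := rfl
  rw [hQeq]
  refine measurable_of_tendsto_metrizable hpart (tendsto_pi_nhds.2 fun sa => ?_)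
  haveI := fun i => isProbabilityMeasure_saLawFrom P π (Measure.dirac sa) i
  have hRmax0 : 0 ≤ Rmax := le_trans (hRr sa).1 (hRr sa).2
  have hsum : Summable fun i => T i sa := by
    refine Summable.of_norm_bounded
      ((summable_geometric_of_lt_one hγ0 hγ1).mul_left Rmax) (fun i => ?_)
    have hb : |∫ x, R x ∂(saLawFrom P π (Measure.dirac sa) i)| ≤ Rmax :=
      abs_integral_le_of_bdd fun x => abs_le.mpr ⟨by linarith [(hRr x).1], (hRr x).2⟩
    rw [hT, Real.norm_eq_abs]
    simp only
    rw [abs_mul, abs_pow, abs_of_nonneg hγ0]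
    calc γ ^ i * |∫ x, R x ∂(saLawFrom P π (Measure.dirac sa) i)| ≤ γ ^ i * Rmax :=
          mul_le_mul_of_nonneg_left hb (pow_nonneg hγ0 i)
      _ = Rmax * γ ^ i := mul_comm _ _
  exact hsum.hasSum.tendsto_sum_nat

end AuxSC2

/-- **Strong convexity lower bound for the population loss at `Q*`**. -/
theorem population_loss_strong_convexity [Nonempty A]
    (P : Kernel (S × A) S) [IsMarkovKernel P]
    (πe : Kernel S A) [IsMarkovKernel πe]
    (μ0 : Measure S) [IsProbabilityMeasure μ0]
    (γ : ℝ) (hγ : γ ∈ Set.Ioo (0 : ℝ) 1)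
    (Rmax : ℝ) (R : S × A → ℝ) (hRmeas : Measurable R)
    (hRrange : ∀ sa, R sa ∈ Set.Icc 0 Rmax)
    -- `π*_e` is optimal almost everywhere (over all non-stationary policies)
    (hopt : ∀ s : S, Vval P (fun _ => πe) γ R s =
      ⨆ π : {π : ℕ → Kernel S A // ∀ i, IsMarkovKernel (π i)}, Vval P π.1 γ R s)
    -- Bellman optimality equation for `Q* = Q_{π*_e}`
    (hBellman : ∀ sa : S × A, Qval P (fun _ => πe) γ R sa =
      R sa + γ * ∫ s', qmax (Qval P (fun _ => πe) γ R) s' ∂(P sa))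
    -- `sup_a Q*(s, a) = Q*(s, π*_e)`
    (hsup : ∀ s : S, qmax (Qval P (fun _ => πe) γ R) s =
      ∫ a, Qval P (fun _ => πe) γ R (s, a) ∂(πe s))
    -- `Q* ∈ [0, V_max]`
    (Vmax : ℝ) (hQstar : ∀ sa, Qval P (fun _ => πe) γ R sa ∈ Set.Icc 0 Vmax)
    -- data distribution
    (dD : Measure (S × A)) [IsProbabilityMeasure dD]
    -- the measure `d`, the weight `w`, and the test function `q`
    (d : Measure (S × A)) [IsProbabilityMeasure d]
    (w : S × A → ℝ) (hwmeas : Measurable w) (hw0 : ∀ x, 0 ≤ w x)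
    (Cw : ℝ) (hwb : ∀ x, w x ≤ Cw)
    (q : S × A → ℝ) (hqmeas : Measurable q) (hqr : ∀ sa, q sa ∈ Set.Icc 0 Vmax)
    (hqmax : Measurable (qmax q)) :
    popLoss P dD γ R d q w - popLoss P dD γ R d (Qval P (fun _ => πe) γ R) w ≥
      0.5 * ∫ sa, ((q sa) ^ 2 - (Qval P (fun _ => πe) γ R sa) ^ 2) ∂d
      + γ * ∫ sa, (q sa - Qval P (fun _ => πe) γ R sa)
          ∂(mdpStep P πe (dD.withDensity fun x => ENNReal.ofReal (w x)))
      - ∫ sa, (q sa - Qval P (fun _ => πe) γ R sa)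
          ∂(dD.withDensity fun x => ENNReal.ofReal (w x)) := by
  classical
  obtain ⟨hγ0, hγ1⟩ := hγ
  haveI : ∀ i : ℕ, IsMarkovKernel ((fun _ : ℕ => πe) i) := fun _ => inferInstance
  set Q : S × A → ℝ := Qval P (fun _ => πe) γ R with hQdef
  have hQmeas : Measurable Q := measurable_Qval P _ hγ0.le hγ1 hRmeas hRrange
  -- nonemptiness and basic bounds
  have hSA : Nonempty (S × A) := by
    rcases isEmpty_or_nonempty (S × A) with h | h
    · exfalso
      have h1 : dD Set.univ = 1 := measure_univ
      rw [Set.univ_eq_empty_iff.2 h] at h1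
      simp at h1
    · exact h
  obtain ⟨x0⟩ := hSA
  have hV0 : (0 : ℝ) ≤ Vmax := le_trans (hqr x0).1 (hqr x0).2
  have hRmax0 : (0 : ℝ) ≤ Rmax := le_trans (hRrange x0).1 (hRrange x0).2
  have hCw0 : (0 : ℝ) ≤ Cw := le_trans (hw0 x0) (hwb x0)
  have hqabs : ∀ sa, |q sa| ≤ Vmax :=
    fun sa => abs_le.mpr ⟨by linarith [(hqr sa).1], (hqr sa).2⟩
  have hQabs : ∀ sa, |Q sa| ≤ Vmax :=
    fun sa => abs_le.mpr ⟨by linarith [(hQstar sa).1], (hQstar sa).2⟩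
  set f : S × A → ℝ := fun sa => q sa - Q sa with hfdef
  have hfmeas : Measurable f := hqmeas.sub hQmeas
  have hfabs : ∀ sa, |f sa| ≤ Vmax := fun sa => abs_le.mpr
    ⟨by have := (hqr sa).1; have := (hQstar sa).2; simp only [hfdef]; linarith,
     by have := (hqr sa).2; have := (hQstar sa).1; simp only [hfdef]; linarith⟩
  -- qmax bounds
  have hqmaxr : ∀ (g : S × A → ℝ), (∀ sa, g sa ∈ Set.Icc 0 Vmax) →
      ∀ s, qmax g s ∈ Set.Icc 0 Vmax := by
    intro g hg s
    have hbdd : BddAbove (Set.range fun a => g (s, a)) :=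
      ⟨Vmax, by rintro y ⟨a, rfl⟩; exact (hg _).2⟩
    constructor
    · exact le_trans (hg (s, Classical.arbitrary A)).1 (le_ciSup hbdd (Classical.arbitrary A))
    · exact ciSup_le fun a => (hg _).2
  have hqmaxq := hqmaxr q hqr
  have hqmaxQ := hqmaxr Q hQstar
  have hqmaxQ_meas : Measurable (qmax Q) := by
    have heq : qmax Q = fun s => ∫ a, Q (s, a) ∂(πe s) := funext hsup
    rw [heq]
    exact (MeasureTheory.StronglyMeasurable.integral_kernel_prod_right' (κ := πe)
      hQmeas.stronglyMeasurable).measurable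
  -- sup dominates the average
  have key_sup : ∀ s : S, ∫ a, q (s, a) ∂(πe s) ≤ qmax q s := by
    intro s
    have hbdd : BddAbove (Set.range fun a => q (s, a)) :=
      ⟨Vmax, by rintro y ⟨a, rfl⟩; exact (hqr _).2⟩
    calc ∫ a, q (s, a) ∂(πe s) ≤ ∫ _, qmax q s ∂(πe s) :=
          integral_mono (integrable_of_bdd
              ((hqmeas.comp measurable_prodMk_left).aestronglyMeasurable)
              (fun a => hqabs (s, a)))
            (integrable_const _) (fun a => le_ciSup hbdd a)
      _ = qmax q s := by simp
  -- the averaged difference h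
  set h : S → ℝ := fun s => ∫ a, f (s, a) ∂(πe s) with hhdef
  have hhmeas : Measurable h :=
    (MeasureTheory.StronglyMeasurable.integral_kernel_prod_right' (κ := πe)
      hfmeas.stronglyMeasurable).measurable
  have hhabs : ∀ s, |h s| ≤ Vmax := fun s => abs_integral_le_of_bdd fun a => hfabs (s, a)
  have h_split : ∀ s, h s = (∫ a, q (s, a) ∂(πe s)) - ∫ a, Q (s, a) ∂(πe s) := by
    intro s
    simp only [hhdef, hfdef]
    exact integral_sub
      (integrable_of_bdd ((hqmeas.comp measurable_prodMk_left).aestronglyMeasurable)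
        (fun a => hqabs (s, a)))
      (integrable_of_bdd ((hQmeas.comp measurable_prodMk_left).aestronglyMeasurable)
        (fun a => hQabs (s, a)))
  have h_le : ∀ s, h s ≤ qmax q s - qmax Q s := by
    intro s
    rw [h_split s, hsup s]
    linarith [key_sup s]
  -- the weighted measure
  set ρw : Measure (S × A) := dD.withDensity fun x => ENNReal.ofReal (w x) with hρwdef
  haveI hρwfin : IsFiniteMeasure ρw := by
    refine isFiniteMeasure_withDensity ?_
    have hle : ∫⁻ x, ENNReal.ofReal (w x) ∂dD ≤ ∫⁻ _, ENNReal.ofReal Cw ∂dD :=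
      lintegral_mono fun x => ENNReal.ofReal_le_ofReal (hwb x)
    refine ne_of_lt (lt_of_le_of_lt hle ?_)
    rw [lintegral_const, measure_univ, mul_one]
    exact ENNReal.ofReal_lt_top
  have hρint : ∀ (g : S × A → ℝ), Measurable g → ∫ x, g x ∂ρw = ∫ x, w x * g x ∂dD := by
    intro g hg
    rw [hρwdef]
    rw [show (fun x : S × A => ENNReal.ofReal (w x))
        = fun x : S × A => ((Real.toNNReal (w x) : NNReal) : ENNReal) from rfl,
      integral_withDensity_eq_integral_smul hwmeas.real_toNNReal g]
    congr 1
    funext x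
    simp [NNReal.smul_def, Real.coe_toNNReal _ (hw0 x)]
  -- step identity
  have hstep_int : ∫ sa, f sa ∂(mdpStep P πe ρw) = ∫ sa, ∫ s', h s' ∂(P sa) ∂ρw := by
    rw [mdpStep_eq_bind, integral_bind_kernel_s12 ρw _ hfmeas hfabs]
    congr 1
    funext sa
    rw [Kernel.comp_apply, integral_bind_kernel_s12 (P sa) _ hfmeas hfabs]
    congr 1
    funext s'
    rw [idProd_apply, integral_map measurable_prodMk_left.aemeasurable
      hfmeas.aestronglyMeasurable]
  -- measurability of sa ↦ ∫ h dP sa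
  have hPh_meas : Measurable fun sa : S × A => ∫ s', h s' ∂(P sa) :=
    (MeasureTheory.StronglyMeasurable.integral_kernel_prod_right' (κ := P)
      (hhmeas.comp measurable_snd).stronglyMeasurable).measurable
  have hPh_abs : ∀ sa : S × A, |∫ s', h s' ∂(P sa)| ≤ Vmax :=
    fun sa => abs_integral_le_of_bdd hhabs
  -- integrands over the sample law
  haveI : IsProbabilityMeasure (dD.compProd P) := by infer_instance
  have hg1meas : Measurable fun x : (S × A) × S => w x.1 * (γ * h x.2) :=
    (hwmeas.comp measurable_fst).mul (measurable_const.mul (hhmeas.comp measurable_snd))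
  have hg1abs : ∀ x : (S × A) × S, |w x.1 * (γ * h x.2)| ≤ Cw * Vmax := by
    intro x
    rw [abs_mul, abs_mul, abs_of_nonneg (hw0 _), abs_of_nonneg hγ0.le]
    calc w x.1 * (γ * |h x.2|) ≤ Cw * (1 * Vmax) :=
          mul_le_mul (hwb _) (mul_le_mul hγ1.le (hhabs _) (abs_nonneg _) zero_le_one)
            (mul_nonneg hγ0.le (abs_nonneg _)) hCw0
      _ = Cw * Vmax := by ring
  have hg2meas : Measurable fun x : (S × A) × S => w x.1 * f x.1 :=
    (hwmeas.comp measurable_fst).mul (hfmeas.comp measurable_fst)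
  have hg2abs : ∀ x : (S × A) × S, |w x.1 * f x.1| ≤ Cw * Vmax := by
    intro x
    rw [abs_mul, abs_of_nonneg (hw0 _)]
    exact mul_le_mul (hwb _) (hfabs _) (abs_nonneg _) hCw0
  have int1 : Integrable (fun x : (S × A) × S => w x.1 * (γ * h x.2)) (dD.compProd P) :=
    integrable_of_bdd hg1meas.aestronglyMeasurable hg1abs
  have int2 : Integrable (fun x : (S × A) × S => w x.1 * f x.1) (dD.compProd P) :=
    integrable_of_bdd hg2meas.aestronglyMeasurable hg2abs
  -- computation of the two linear terms
  have e5a : ∫ x, w x.1 * (γ * h x.2) ∂(dD.compProd P)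
      = γ * ∫ sa, f sa ∂(mdpStep P πe ρw) := by
    rw [Measure.integral_compProd int1, hstep_int,
      hρint (fun sa => ∫ s', h s' ∂(P sa)) hPh_meas, ← integral_const_mul]
    congr 1
    funext sa
    show ∫ s', w sa * (γ * h s') ∂(P sa) = γ * (w sa * ∫ s', h s' ∂(P sa))
    rw [integral_const_mul, integral_const_mul]
    ring
  have e5b : ∫ x, w x.1 * f x.1 ∂(dD.compProd P) = ∫ sa, f sa ∂ρw := by
    rw [Measure.integral_compProd int2, hρint f hfmeas]
    congr 1
    funext sa
    simp
  -- pointwise lower bound for the loss difference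
  have hpt : ∀ x : (S × A) × S, w x.1 * (γ * h x.2) - w x.1 * f x.1
      ≤ lossTerm γ R q w x - lossTerm γ R Q w x := by
    intro x
    have hd : lossTerm γ R q w x - lossTerm γ R Q w x
        = w x.1 * (γ * (qmax q x.2 - qmax Q x.2)) - w x.1 * f x.1 := by
      simp only [lossTerm, hfdef]
      ring
    rw [hd]
    have h1 := h_le x.2
    have h2 := mul_le_mul_of_nonneg_left (mul_le_mul_of_nonneg_left h1 hγ0.le) (hw0 x.1)
    linarith
  -- integrability of loss terms
  have hlossmeas : ∀ (g : S × A → ℝ), Measurable g → Measurable (qmax g) →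
      Measurable (lossTerm γ R g w) := by
    intro g hg hgm
    exact (hwmeas.comp measurable_fst).mul
      (((measurable_const.mul (hgm.comp measurable_snd)).add
        (hRmeas.comp measurable_fst)).sub (hg.comp measurable_fst))
  have hlossabs : ∀ (g : S × A → ℝ), (∀ sa, g sa ∈ Set.Icc 0 Vmax) →
      (∀ s, qmax g s ∈ Set.Icc 0 Vmax) →
      ∀ x : (S × A) × S, |lossTerm γ R g w x| ≤ Cw * (Vmax + Rmax + Vmax) := by
    intro g hg hgm x
    rw [show lossTerm γ R g w x = w x.1 * (γ * qmax g x.2 + R x.1 - g x.1) from rfl,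
      abs_mul, abs_of_nonneg (hw0 _)]
    have hA : |γ * qmax g x.2| ≤ Vmax := by
      rw [abs_mul, abs_of_nonneg hγ0.le, abs_of_nonneg (hgm _).1]
      calc γ * qmax g x.2 ≤ 1 * Vmax :=
            mul_le_mul hγ1.le (hgm _).2 (hgm _).1 zero_le_one
        _ = Vmax := one_mul _
    have hB : |R x.1| ≤ Rmax := abs_le.mpr ⟨by linarith [(hRrange x.1).1], (hRrange x.1).2⟩
    have hC : |g x.1| ≤ Vmax := abs_le.mpr ⟨by linarith [(hg x.1).1], (hg x.1).2⟩
    have h2 : |γ * qmax g x.2 + R x.1 - g x.1| ≤ Vmax + Rmax + Vmax := by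
      rw [sub_eq_add_neg]
      calc |γ * qmax g x.2 + R x.1 + -g x.1| ≤ |γ * qmax g x.2 + R x.1| + |(-g x.1)| :=
            abs_add_le _ _
        _ ≤ |γ * qmax g x.2| + |R x.1| + |g x.1| := by
            rw [abs_neg]; exact add_le_add (abs_add_le _ _) le_rfl
        _ ≤ Vmax + Rmax + Vmax := by linarith
    exact mul_le_mul (hwb _) h2 (abs_nonneg _) hCw0
  have intLq : Integrable (lossTerm γ R q w) (dD.compProd P) :=
    integrable_of_bdd (hlossmeas q hqmeas hqmax).aestronglyMeasurable (hlossabs q hqr hqmaxq)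
  have intLQ : Integrable (lossTerm γ R Q w) (dD.compProd P) :=
    integrable_of_bdd (hlossmeas Q hQmeas hqmaxQ_meas).aestronglyMeasurable
      (hlossabs Q hQstar hqmaxQ)
  -- monotonicity of the integral
  have hmono : ∫ x, (w x.1 * (γ * h x.2) - w x.1 * f x.1) ∂(dD.compProd P)
      ≤ ∫ x, (lossTerm γ R q w x - lossTerm γ R Q w x) ∂(dD.compProd P) :=
    integral_mono (int1.sub int2) (intLq.sub intLQ) hpt
  rw [integral_sub int1 int2, e5a, e5b, integral_sub intLq intLQ] at hmono
  -- integrability of squares on d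
  have intq2 : Integrable (fun sa => (q sa) ^ 2) d :=
    integrable_of_bdd ((hqmeas.pow_const 2).aestronglyMeasurable)
      (fun sa => by
        rw [abs_pow]
        exact pow_le_pow_left₀ (abs_nonneg _) (hqabs sa) 2)
  have intQ2 : Integrable (fun sa => (Q sa) ^ 2) d :=
    integrable_of_bdd ((hQmeas.pow_const 2).aestronglyMeasurable)
      (fun sa => by
        rw [abs_pow]
        exact pow_le_pow_left₀ (abs_nonneg _) (hQabs sa) 2)
  have hsq : ∫ sa, ((q sa) ^ 2 - (Q sa) ^ 2) ∂d
      = ∫ sa, (q sa) ^ 2 ∂d - ∫ sa, (Q sa) ^ 2 ∂d := integral_sub intq2 intQ2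
  -- conclude
  have hpop : popLoss P dD γ R d q w - popLoss P dD γ R d Q w
      = 0.5 * ∫ sa, ((q sa) ^ 2 - (Q sa) ^ 2) ∂d
        + (∫ x, lossTerm γ R q w x ∂(dD.compProd P)
          - ∫ x, lossTerm γ R Q w x ∂(dD.compProd P)) := by
    simp only [popLoss, sampleLaw]
    rw [hsq]
    ring
  rw [ge_iff_le, hpop]
  have hint_f_eq : ∫ sa, (q sa - Q sa) ∂(mdpStep P πe ρw) = ∫ sa, f sa ∂(mdpStep P πe ρw) :=
    rfl
  have hint_f_eq2 : ∫ sa, (q sa - Q sa) ∂ρw = ∫ sa, f sa ∂ρw := rfl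
  linarith [hmono]
end
end

section
/- From L¹ distance to advantage: assume there is β* ∈ B with β*(s, a)·π_c(da|s) = π*_e(da|s) for every s (so π_{β*} = π*_e). Let q̂ : S × A → [0, V_max] be any bounded measurable function, let β̂ ∈ argmax_{β∈B} ⟨μ_c, q̂(·, π_β)⟩, and let π̂ = π_{β̂}. Then ⟨μ_c, Q*(·, π*_e) − Q*(·, π̂)⟩ ≤ 2·U_B·‖q̂ − Q*‖_{L¹(d_c)}. -/
open MeasureTheory ProbabilityTheory Filter Set

noncomputable section

variable {S A : Type*} [MeasurableSpace S] [MeasurableSpace A]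

open scoped NNReal ENNReal

namespace L1AdvAux

def stepK (P : Kernel (S × A) S) (κ : Kernel S A) : Kernel (S × A) (S × A) :=
  (Kernel.id ×ₖ κ) ∘ₖ P

instance (P : Kernel (S × A) S) [IsMarkovKernel P] (κ : Kernel S A) [IsMarkovKernel κ] :
    IsMarkovKernel (stepK P κ) := by
  rw [stepK]; infer_instance

lemma stepK_apply (P : Kernel (S × A) S) (κ : Kernel S A) [IsSFiniteKernel κ] (sa : S × A) :
    stepK P κ sa = (P sa).bind fun s' => (κ s').map fun a' => (s', a') := by
  rw [stepK, Kernel.comp_apply]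
  congr 1
  funext s'
  rw [Kernel.prod_apply, Kernel.id_apply, Measure.dirac_prod]

def iterK (P : Kernel (S × A) S) (π : ℕ → Kernel S A) : ℕ → Kernel (S × A) (S × A)
  | 0 => Kernel.id
  | i + 1 => stepK P (π (i + 1)) ∘ₖ iterK P π i

instance iterK_markov (P : Kernel (S × A) S) [IsMarkovKernel P] (π : ℕ → Kernel S A)
    [∀ i, IsMarkovKernel (π i)] (i : ℕ) : IsMarkovKernel (iterK P π i) := by
  induction i with
  | zero => rw [iterK]; infer_instance
  | succ i ih => rw [iterK]; infer_instance

lemma saLawFrom_dirac (P : Kernel (S × A) S) (π : ℕ → Kernel S A)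
    [∀ i, IsMarkovKernel (π i)] (sa : S × A) (i : ℕ) :
    saLawFrom P π (Measure.dirac sa) i = iterK P π i sa := by
  induction i with
  | zero => rw [saLawFrom, iterK, Kernel.id_apply]
  | succ i ih =>
    rw [saLawFrom, ih, iterK, Kernel.comp_apply, mdpStep]
    congr 1
    funext x
    exact (stepK_apply P (π (i + 1)) x).symm

lemma qval_measurable (P : Kernel (S × A) S) [IsMarkovKernel P] (π : ℕ → Kernel S A)
    [∀ i, IsMarkovKernel (π i)] {γ : ℝ} (hγ : γ ∈ Set.Ioo (0 : ℝ) 1)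
    {R : S × A → ℝ} (hR : Measurable R) {Rmax : ℝ} (hRb : ∀ sa, R sa ∈ Set.Icc 0 Rmax) :
    Measurable (Qval P π γ R) := by
  have hterm : ∀ i, Measurable fun sa => ∫ x, R x ∂(saLawFrom P π (Measure.dirac sa) i) := by
    intro i
    have h : Measurable fun sa : S × A => ∫ x, R x ∂(iterK P π i sa) := by
      have := (hR.comp measurable_snd).stronglyMeasurable.integral_kernel_prod_right'
        (κ := iterK P π i)
      exact this.measurable
    simpa only [saLawFrom_dirac P π] using h
  have hbd : ∀ i sa, (0:ℝ) ≤ ∫ x, R x ∂(saLawFrom P π (Measure.dirac sa) i) ∧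
      ∫ x, R x ∂(saLawFrom P π (Measure.dirac sa) i) ≤ Rmax := by
    intro i sa
    rw [saLawFrom_dirac P π]
    constructor
    · exact integral_nonneg fun x => (hRb x).1
    · calc ∫ x, R x ∂(iterK P π i sa) ≤ ∫ _x, Rmax ∂(iterK P π i sa) := by
            refine integral_mono ?_ (integrable_const _) fun x => (hRb x).2
            refine ⟨hR.aestronglyMeasurable, ?_⟩
            exact HasFiniteIntegral.of_bounded (C := max Rmax (-Rmax))
              (ae_of_all _ fun x => by
                rw [Real.norm_eq_abs, abs_le]
                exact ⟨le_trans (neg_le_neg (le_max_left _ _)) (by linarith [(hRb x).1, (hRb x).2]),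
                  le_trans (hRb x).2 (le_max_left _ _)⟩)
      _ = Rmax := by simp
  have hsummable : ∀ sa,
      Summable fun i => γ ^ i * ∫ x, R x ∂(saLawFrom P π (Measure.dirac sa) i) := by
    intro sa
    refine Summable.of_nonneg_of_le (fun i => ?_) (fun i => ?_)
      ((summable_geometric_of_lt_one hγ.1.le hγ.2).mul_right Rmax)
    · exact mul_nonneg (pow_nonneg hγ.1.le _) (hbd i sa).1
    · exact mul_le_mul_of_nonneg_left (hbd i sa).2 (pow_nonneg hγ.1.le _)
  refine measurable_of_tendsto_metrizable
    (f := fun n sa => ∑ i ∈ Finset.range n, γ ^ i * ∫ x, R x ∂(saLawFrom P π (Measure.dirac sa) i))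
    (fun n => Finset.measurable_sum _ fun i _ => (measurable_const.mul (hterm i))) ?_
  rw [tendsto_pi_nhds]
  intro sa
  exact ((hsummable sa).hasSum).tendsto_sum_nat


lemma bdd_integrable {α : Type*} [MeasurableSpace α] (μ : Measure α) [IsFiniteMeasure μ]
    {f : α → ℝ} (hm : Measurable f) {C : ℝ} (hb : ∀ x, |f x| ≤ C) : Integrable f μ :=
  ⟨hm.aestronglyMeasurable, HasFiniteIntegral.of_bounded (C := C)
    (ae_of_all _ fun x => by rw [Real.norm_eq_abs]; exact hb x)⟩

end L1AdvAux

/-- The reweighted policy `π_β(da|s) = β(s, a) · π_c(da|s)`. -/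
def polRatio (πc : Kernel S A) [IsSFiniteKernel πc] (β : S × A → ℝ) : Kernel S A :=
  Kernel.withDensity πc fun s a => ENNReal.ofReal (β (s, a))


namespace L1AdvAux

lemma polRatio_integral (πc : Kernel S A) [IsSFiniteKernel πc] {β : (S × A) → ℝ}
    (hβm : Measurable β) (hβ0 : ∀ x, 0 ≤ β x) (f : S × A → ℝ) (s : S) :
    ∫ a, f (s, a) ∂(polRatio πc β s) = ∫ a, β (s, a) * f (s, a) ∂(πc s) := by
  rw [polRatio, Kernel.withDensity_apply]
  · have h1 : ((πc s).withDensity fun a => ENNReal.ofReal (β (s, a)))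
        = (πc s).withDensity fun a => (((β (s, a)).toNNReal : ℝ≥0) : ℝ≥0∞) := rfl
    have hm : Measurable fun a : A => (β (s, a)).toNNReal :=
      measurable_real_toNNReal.comp (hβm.comp measurable_prodMk_left)
    rw [h1, integral_withDensity_eq_integral_smul hm]
    refine integral_congr_ae (ae_of_all _ fun a => ?_)
    show (β (s, a)).toNNReal • f (s, a) = β (s, a) * f (s, a)
    rw [NNReal.smul_def, Real.coe_toNNReal _ (hβ0 _), smul_eq_mul]
  · exact ENNReal.measurable_ofReal.comp (hβm.comp (measurable_fst.prodMk measurable_snd))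

end L1AdvAux

/-- **From L¹ distance to advantage**:
`⟨μ_c, Q*(·, π*_e) - Q*(·, π̂)⟩ ≤ 2 U_B ‖q̂ - Q*‖_{L¹(d_c)}`. -/
theorem l1_to_advantage
    (P : Kernel (S × A) S) [IsMarkovKernel P]
    (πe : Kernel S A) [IsMarkovKernel πe]
    (μ0 : Measure S) [IsProbabilityMeasure μ0]
    (γ : ℝ) (hγ : γ ∈ Set.Ioo (0 : ℝ) 1)
    (Rmax : ℝ) (R : S × A → ℝ) (hRmeas : Measurable R)
    (hRrange : ∀ sa, R sa ∈ Set.Icc 0 Rmax)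
    -- `π*_e` is optimal almost everywhere (over all non-stationary policies)
    (hopt : ∀ s : S, Vval P (fun _ => πe) γ R s =
      ⨆ π : {π : ℕ → Kernel S A // ∀ i, IsMarkovKernel (π i)}, Vval P π.1 γ R s)
    -- `Q* ∈ [0, V_max]`
    (Vmax : ℝ) (hQstar : ∀ sa, Qval P (fun _ => πe) γ R sa ∈ Set.Icc 0 Vmax)
    -- covering distribution `d_c = μ_c ⊗ π_c`
    (μc : Measure S) [IsProbabilityMeasure μc]
    (πc : Kernel S A) [IsMarkovKernel πc]
    -- the policy-ratio class `B`
    (UB : ℝ) (Bc : Finset ((S × A) → ℝ)) (hBne : Bc.Nonempty)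
    (hBc : ∀ β ∈ Bc, Measurable β ∧ (∀ x, β x ∈ Set.Icc 0 UB) ∧
      ∀ s, ∫ a, β (s, a) ∂(πc s) = 1)
    -- realizability of `B`: some `β* ∈ B` satisfies `β* · π_c = π*_e`
    (hβstar : ∃ βstar ∈ Bc, ∀ s : S, polRatio πc βstar s = πe s)
    -- an arbitrary bounded measurable `q̂`
    (qhat : S × A → ℝ) (hqhatMeas : Measurable qhat)
    (hqhatRange : ∀ sa, qhat sa ∈ Set.Icc 0 Vmax)
    -- `β̂ ∈ argmax_{β ∈ B} ⟨μ_c, q̂(·, π_β)⟩`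
    (βhat : (S × A) → ℝ) (hβhatMem : βhat ∈ Bc)
    (hβhatMax : ∀ β ∈ Bc,
      ∫ s, (∫ a, qhat (s, a) ∂(polRatio πc β s)) ∂μc ≤
        ∫ s, (∫ a, qhat (s, a) ∂(polRatio πc βhat s)) ∂μc) :
    ∫ s,
        ((∫ a, Qval P (fun _ => πe) γ R (s, a) ∂(πe s)) -
          (∫ a, Qval P (fun _ => πe) γ R (s, a) ∂(polRatio πc βhat s))) ∂μc ≤
      2 * UB * ∫ sa, |qhat sa - Qval P (fun _ => πe) γ R sa| ∂(μc.compProd πc) := by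
  obtain ⟨βs, hβsMem, hβsEq⟩ := hβstar
  obtain ⟨hβsM, hβsB, -⟩ := hBc βs hβsMem
  obtain ⟨hβhM, hβhB, -⟩ := hBc βhat hβhatMem
  haveI : ∀ i : ℕ, IsMarkovKernel ((fun _ : ℕ => πe) i) := fun _ =>
    inferInstanceAs (IsMarkovKernel πe)
  set Q : S × A → ℝ := Qval P (fun _ => πe) γ R with hQdef
  have hQmeas : Measurable Q :=
    L1AdvAux.qval_measurable P (fun _ => πe) hγ hRmeas hRrange
  have hQb : ∀ sa, Q sa ∈ Set.Icc 0 Vmax := hQstar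
  have hSne : Nonempty S := by
    by_contra h
    rw [not_nonempty_iff] at h
    have h1 : μc Set.univ = 1 := measure_univ
    rw [Set.univ_eq_empty_iff.2 h, measure_empty] at h1
    exact zero_ne_one h1
  obtain ⟨s0⟩ := hSne
  have hAne : Nonempty A := by
    by_contra h
    rw [not_nonempty_iff] at h
    have h1 : (πc s0) Set.univ = 1 := measure_univ
    rw [Set.univ_eq_empty_iff.2 h, measure_empty] at h1
    exact zero_ne_one h1
  obtain ⟨a0⟩ := hAne
  have hUB0 : 0 ≤ UB := le_trans (hβhB (s0, a0)).1 (hβhB (s0, a0)).2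
  have hVmax0 : 0 ≤ Vmax := le_trans (hQb (s0, a0)).1 (hQb (s0, a0)).2
  -- master facts for a bounded ratio `β` and bounded nonnegative `f`
  have master : ∀ β : (S × A) → ℝ, Measurable β → (∀ x, β x ∈ Set.Icc 0 UB) →
      ∀ f : S × A → ℝ, Measurable f → (∀ x, f x ∈ Set.Icc 0 Vmax) →
      Integrable (fun sa => β sa * f sa) (μc ⊗ₘ πc) ∧
      Integrable (fun s => ∫ a, β (s, a) * f (s, a) ∂(πc s)) μc ∧
      (∀ s, ∫ a, f (s, a) ∂(polRatio πc β s) = ∫ a, β (s, a) * f (s, a) ∂(πc s)) := by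
    intro β hβm hβb f hfm hfb
    have hbd : ∀ x, |β x * f x| ≤ UB * Vmax := by
      intro x
      rw [abs_mul, abs_of_nonneg (hβb x).1, abs_of_nonneg (hfb x).1]
      exact mul_le_mul (hβb x).2 (hfb x).2 (hfb x).1 hUB0
    have h1 : Integrable (fun sa => β sa * f sa) (μc ⊗ₘ πc) :=
      L1AdvAux.bdd_integrable _ (hβm.mul hfm) hbd
    have he : ∀ s, ∫ a, f (s, a) ∂(polRatio πc β s) = ∫ a, β (s, a) * f (s, a) ∂(πc s) :=
      L1AdvAux.polRatio_integral πc hβm (fun x => (hβb x).1) f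
    have h2 : Integrable (fun s => ∫ a, β (s, a) * f (s, a) ∂(πc s)) μc := by
      refine L1AdvAux.bdd_integrable _ ?_ (C := UB * Vmax) ?_
      · exact ((hβm.mul hfm).stronglyMeasurable.integral_kernel_prod_right'
          (κ := πc)).measurable
      · intro s
        have habs : |∫ a, β (s, a) * f (s, a) ∂(πc s)| ≤
            ∫ a, |β (s, a) * f (s, a)| ∂(πc s) := by
          simpa only [Real.norm_eq_abs] using
            norm_integral_le_integral_norm (μ := πc s) (fun a => β (s, a) * f (s, a))
        refine le_trans habs ?_
        calc ∫ a, |β (s, a) * f (s, a)| ∂(πc s) ≤ ∫ _a, UB * Vmax ∂(πc s) := by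
              refine integral_mono ?_ (integrable_const _) fun a => hbd _
              exact L1AdvAux.bdd_integrable _
                (((hβm.mul hfm).comp measurable_prodMk_left).abs)
                (C := UB * Vmax) fun a => by rw [abs_abs]; exact hbd _
          _ = UB * Vmax := by simp
    exact ⟨h1, h2, he⟩
  obtain ⟨hIsQ, hI2sQ, heSQ⟩ := master βs hβsM hβsB Q hQmeas hQb
  obtain ⟨hIhQ, hI2hQ, heHQ⟩ := master βhat hβhM hβhB Q hQmeas hQb
  obtain ⟨hIsq, hI2sq, heSq⟩ := master βs hβsM hβsB qhat hqhatMeas hqhatRange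
  obtain ⟨hIhq, hI2hq, heHq⟩ := master βhat hβhM hβhB qhat hqhatMeas hqhatRange
  set d : Measure (S × A) := μc ⊗ₘ πc with hd
  set N : ℝ := ∫ sa, |qhat sa - Q sa| ∂d with hN
  have intAbs : Integrable (fun sa => |qhat sa - Q sa|) d := by
    refine L1AdvAux.bdd_integrable _ ((hqhatMeas.sub hQmeas).abs) (C := Vmax) fun x => ?_
    rw [abs_abs, abs_sub_le_iff]
    constructor
    · linarith [(hqhatRange x).2, (hQb x).1]
    · linarith [(hQb x).2, (hqhatRange x).1]
  -- middle term: argmax property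
  have hmid : (∫ sa, βs sa * qhat sa ∂d) ≤ ∫ sa, βhat sa * qhat sa ∂d := by
    have h := hβhatMax βs hβsMem
    have e1 : ∫ s, (∫ a, qhat (s, a) ∂(polRatio πc βs s)) ∂μc =
        ∫ sa, βs sa * qhat sa ∂d := by
      rw [hd, Measure.integral_compProd hIsq]
      exact integral_congr_ae (ae_of_all _ fun s => heSq s)
    have e2 : ∫ s, (∫ a, qhat (s, a) ∂(polRatio πc βhat s)) ∂μc =
        ∫ sa, βhat sa * qhat sa ∂d := by
      rw [hd, Measure.integral_compProd hIhq]
      exact integral_congr_ae (ae_of_all _ fun s => heHq s)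
    rw [← e1, ← e2]
    exact h
  -- generic bound for the two outer terms
  have hub : ∀ β : (S × A) → ℝ, (∀ x, β x ∈ Set.Icc 0 UB) →
      ∀ g h : S × A → ℝ, Integrable (fun sa => β sa * g sa) d →
      Integrable (fun sa => β sa * h sa) d →
      (∀ x, |g x - h x| ≤ |qhat x - Q x|) →
      (∫ sa, β sa * g sa ∂d) - ∫ sa, β sa * h sa ∂d ≤ UB * N := by
    intro β hb g h hig hih habs
    rw [← integral_sub hig hih]
    have hptle : ∀ x, β x * g x - β x * h x ≤ UB * |qhat x - Q x| := by
      intro x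
      rw [← mul_sub]
      calc β x * (g x - h x) ≤ β x * |g x - h x| :=
            mul_le_mul_of_nonneg_left (le_abs_self _) (hb x).1
        _ ≤ UB * |qhat x - Q x| := mul_le_mul (hb x).2 (habs x) (abs_nonneg _) hUB0
    calc (∫ x, (β x * g x - β x * h x) ∂d) ≤ ∫ x, UB * |qhat x - Q x| ∂d :=
          integral_mono (hig.sub hih) (intAbs.const_mul UB) hptle
      _ = UB * N := by rw [hN, integral_const_mul]
  have h1 := hub βs hβsB Q qhat hIsQ hIsq
    (fun x => le_of_eq (abs_sub_comm _ _))
  have h2 := hub βhat hβhB qhat Q hIhq hIhQ (fun x => le_rfl)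
  calc ∫ s, ((∫ a, Q (s, a) ∂(πe s)) - ∫ a, Q (s, a) ∂(polRatio πc βhat s)) ∂μc
      = ∫ s, ((∫ a, βs (s, a) * Q (s, a) ∂(πc s)) -
          ∫ a, βhat (s, a) * Q (s, a) ∂(πc s)) ∂μc := by
        refine integral_congr_ae (ae_of_all _ fun s => ?_)
        simp only [← hβsEq, heSQ, heHQ]
    _ = (∫ s, (∫ a, βs (s, a) * Q (s, a) ∂(πc s)) ∂μc) -
          ∫ s, (∫ a, βhat (s, a) * Q (s, a) ∂(πc s)) ∂μc := integral_sub hI2sQ hI2hQ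
    _ = (∫ sa, βs sa * Q sa ∂d) - ∫ sa, βhat sa * Q sa ∂d := by
        rw [hd, ← Measure.integral_compProd hIsQ, ← Measure.integral_compProd hIhQ]
    _ ≤ 2 * UB * N := by linarith
    _ = 2 * UB * ∫ sa, |qhat sa - Q sa| ∂(μc.compProd πc) := by rw [hN]
end
end
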